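/- arXiv:2103.00061 — 7 statements merged into one kernel-verified Lean document; each statement's English description precedes it below -/
import Mathlib

section
/- Let v(ρ) = v_max − ρ^γ with γ > 0 and v_max > 0. Let x₀,…,x_n solve the follow-the-leader system with strictly ordered initial positions. Then for all t ≥ 0, all n ∈ ℕ, and all i ∈ {0,…,n−1}, one has t·(v(R_{i+1}(t)) − v(R_i(t)))/(x_{i+1}(t) − x_i(t)) ≤ 1/(γ+1), equivalently, with f(ρ) := ρ·v(ρ), t·(f'(R_{i+1}(t)) − f'(R_i(t)))/(x_{i+1}(t) − x_i(t)) ≤ 1 (with the convention R_n(t) := 0). -/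
open MeasureTheory Set Filter Topology

lemma barrier_lemma {F : ℝ → ℝ} {ε T : ℝ} (hT : 0 ≤ T)
    (hF0 : F 0 < ε)
    (hcont : ContinuousOn F (Set.Icc 0 T))
    (hderiv : ∀ s, 0 ≤ s → s < T → F s = ε →
      ∃ F', F' < 0 ∧ HasDerivWithinAt F F' (Set.Ici 0) s) :
    F T ≤ ε := by
  by_contra hFT
  push_neg at hFT
  set S : Set ℝ := {u | u ∈ Set.Icc 0 T ∧ F u ≤ ε} with hSdef
  have hS0 : (0:ℝ) ∈ S := ⟨⟨le_refl _, hT⟩, hF0.le⟩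
  have hSne : S.Nonempty := ⟨0, hS0⟩
  have hSbdd : BddAbove S := ⟨T, fun u hu => hu.1.2⟩
  have hSclosed : IsClosed S := by
    have h : S = Set.Icc 0 T ∩ F ⁻¹' Set.Iic ε := by
      ext u; simp [hSdef, Set.mem_setOf_eq]
    rw [h]
    exact hcont.preimage_isClosed_of_isClosed isClosed_Icc isClosed_Iic
  have hsmem : sSup S ∈ S := hSclosed.csSup_mem hSne hSbdd
  set s := sSup S with hs
  have hs0 : 0 ≤ s := hsmem.1.1
  have hsT : s < T := by
    rcases lt_or_eq_of_le hsmem.1.2 with h | h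
    · exact h
    · exact absurd hsmem.2 (by rw [h]; exact not_le.2 hFT)
  have hnb : (𝓝[Set.Ioc s T] s).NeBot :=
    mem_closure_iff_nhdsWithin_neBot.1 (by rw [closure_Ioc hsT.ne]; exact ⟨le_rfl, hsT.le⟩)
  have hcontra : ∀ u ∈ S, u ≤ s := fun u hu => le_csSup hSbdd hu
  have hmem : ∃ u ∈ Set.Ioc s T, F u ≤ ε := by
    rcases lt_or_eq_of_le hsmem.2 with hlt | heq
    · have h1 : ∀ᶠ u in 𝓝[Set.Icc 0 T] s, F u < ε :=
        (hcont s hsmem.1).eventually (Filter.Tendsto.eventually_lt_const hlt tendsto_id)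
      have h2 : ∀ᶠ u in 𝓝[Set.Ioc s T] s, F u < ε :=
        h1.filter_mono (nhdsWithin_mono _ (show Set.Ioc s T ⊆ Set.Icc 0 T from fun u hu => ⟨hs0.trans hu.1.le, hu.2⟩))
      obtain ⟨u, hu1, hu2⟩ := (h2.and eventually_mem_nhdsWithin).exists
      exact ⟨u, hu2, hu1.le⟩
    · obtain ⟨F', hF'neg, hF'⟩ := hderiv s hs0 hsT heq
      rw [hasDerivWithinAt_iff_tendsto_slope] at hF'
      have h1 : ∀ᶠ u in 𝓝[Set.Ici 0 \ {s}] s, slope F s u < 0 :=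
        hF'.eventually (Filter.Tendsto.eventually_lt_const hF'neg tendsto_id)
      have h2 : ∀ᶠ u in 𝓝[Set.Ioc s T] s, slope F s u < 0 :=
        h1.filter_mono (nhdsWithin_mono _
          (show Set.Ioc s T ⊆ Set.Ici 0 \ {s} from
            fun u hu => ⟨hs0.trans hu.1.le, ne_of_gt hu.1⟩))
      obtain ⟨u, hu1, hu2⟩ := (h2.and eventually_mem_nhdsWithin).exists
      refine ⟨u, hu2, ?_⟩
      have hus : 0 < u - s := sub_pos.2 hu2.1
      have hsl : (F u - F s) / (u - s) < 0 := by
        have := hu1; rwa [slope_def_field] at this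
      rcases div_neg_iff.1 hsl with ⟨_, h⟩ | ⟨h, _⟩
      · linarith
      · linarith [heq ▸ h]
  obtain ⟨u, hu1, hu2⟩ := hmem
  have : u ≤ s := hcontra u ⟨⟨hs0.trans hu1.1.le, hu1.2⟩, hu2⟩
  exact absurd hu1.1 (not_lt.2 this)


/-- **Improved one-sided Lipschitz condition** (Theorem 2.5 of the paper).
For `v(ρ) = v_max - ρ^γ` with `γ > 0`, the follow-the-leader approximation satisfies,
for all `t ≥ 0` and all `i ∈ {0,…,n-1}`,
`t (v(R_{i+1}) - v(R_i)) / (x_{i+1} - x_i) ≤ 1/(γ+1)`, equivalently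
`t (f'(R_{i+1}) - f'(R_i)) / (x_{i+1} - x_i) ≤ 1` where `f'(ρ) = v_max - (γ+1) ρ^γ`,
with the convention `R_n(t) = 0`. -/
theorem improved_one_sided_lipschitz
    (vmax γ : ℝ) (hvmax : 0 < vmax) (hγ : 0 < γ)
    (v : ℝ → ℝ) (hvdef : ∀ r : ℝ, v r = vmax - r ^ γ)
    (n : ℕ) (hn : 0 < n) (x : ℕ → ℝ → ℝ)
    (R : ℕ → ℝ → ℝ)
    -- R_i(t) = (1/n)/(x_{i+1}(t) - x_i(t)) for i < n, and R_n(t) = 0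
    (hRdef : ∀ i t, R i t = if i < n then (1 / n) / (x (i + 1) t - x i t) else 0)
    -- strictly ordered particles
    (horder : ∀ t ∈ Set.Ici (0:ℝ), ∀ i < n, x i t < x (i + 1) t)
    -- follow-the-leader system
    (hode : ∀ i < n, ∀ t ∈ Set.Ici (0:ℝ),
      HasDerivWithinAt (x i) (v (R i t)) (Set.Ici 0) t)
    (hoden : ∀ t ∈ Set.Ici (0:ℝ), HasDerivWithinAt (x n) vmax (Set.Ici 0) t) :
    ∀ t ∈ Set.Ici (0:ℝ), ∀ i < n,
      t * (v (R (i + 1) t) - v (R i t)) / (x (i + 1) t - x i t) ≤ 1 / (γ + 1) ∧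
      t * ((vmax - (γ + 1) * R (i + 1) t ^ γ) - (vmax - (γ + 1) * R i t ^ γ)) /
          (x (i + 1) t - x i t) ≤ 1 := by
  have hγ1 : (0:ℝ) < γ + 1 := by linarith
  set d : ℕ → ℝ → ℝ := fun i t => x (i + 1) t - x i t with hddef
  have hd_pos : ∀ i < n, ∀ t ∈ Set.Ici (0:ℝ), 0 < d i t :=
    fun i hi t ht => sub_pos.2 (horder t ht i hi)
  have hncast : (0:ℝ) < (n:ℝ) := Nat.cast_pos.2 hn
  have hR_eq : ∀ i < n, ∀ t, R i t = (1 / n) / d i t := by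
    intro i hi t; rw [hRdef]; simp [hi, hddef]
  have hRn : ∀ t, R n t = 0 := fun t => by rw [hRdef]; simp
  have hR_pos : ∀ i < n, ∀ t ∈ Set.Ici (0:ℝ), 0 < R i t := by
    intro i hi t ht
    rw [hR_eq i hi t]
    exact div_pos (by positivity) (hd_pos i hi t ht)
  have hRγ_nonneg : ∀ i, i ≤ n → ∀ t ∈ Set.Ici (0:ℝ), 0 ≤ R i t ^ γ := by
    intro i hi t ht
    rcases lt_or_eq_of_le hi with h | h
    · exact (Real.rpow_pos_of_pos (hR_pos i h t ht) γ).le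
    · rw [h, hRn, Real.zero_rpow hγ.ne']
  have hode' : ∀ i, i ≤ n → ∀ t ∈ Set.Ici (0:ℝ),
      HasDerivWithinAt (x i) (v (R i t)) (Set.Ici 0) t := by
    intro i hi t ht
    rcases lt_or_eq_of_le hi with h | h
    · exact hode i h t ht
    · subst h
      have : v (R i t) = vmax := by
        rw [hRn, hvdef, Real.zero_rpow hγ.ne', sub_zero]
      rw [this]; exact hoden t ht
  have hd' : ∀ i < n, ∀ t ∈ Set.Ici (0:ℝ),
      HasDerivWithinAt (d i) (R i t ^ γ - R (i + 1) t ^ γ) (Set.Ici 0) t := by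
    intro i hi t ht
    have h := (hode' (i + 1) hi t ht).sub (hode' i hi.le t ht)
    have hval : v (R (i + 1) t) - v (R i t) = R i t ^ γ - R (i + 1) t ^ γ := by
      rw [hvdef, hvdef]; ring
    rw [hval] at h
    exact h
  -- derivative of t ↦ R i t ^ γ for i < n
  have hRγ' : ∀ i < n, ∀ t ∈ Set.Ici (0:ℝ),
      HasDerivWithinAt (fun τ => R i τ ^ γ)
        (-(γ * R i t ^ γ * (R i t ^ γ - R (i + 1) t ^ γ) / d i t)) (Set.Ici 0) t := by
    intro i hi t ht
    have hdne : d i t ≠ 0 := (hd_pos i hi t ht).ne'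
    have hRfun : (R i) = fun τ => (1 / n) / d i τ := funext (hR_eq i hi)
    have hRder : HasDerivWithinAt (R i)
        ((0 * d i t - (1 / n) * (R i t ^ γ - R (i + 1) t ^ γ)) / (d i t) ^ 2)
        (Set.Ici 0) t := by
      have h0 := (hasDerivWithinAt_const t (Set.Ici (0:ℝ)) ((1:ℝ) / n)).div (hd' i hi t ht) hdne
      exact hRfun ▸ h0
    have h := hRder.rpow_const (p := γ) (Or.inl (hR_pos i hi t ht).ne')
    convert h using 1
    have hRpos := hR_pos i hi t ht
    have e1 : R i t ^ γ = R i t ^ (γ - 1) * R i t := by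
      rw [← Real.rpow_add_one hRpos.ne' (γ - 1)]; ring_nf
    have e2 : R i t = (1 / n) / d i t := hR_eq i hi t
    rw [e1]
    rw [e2]
    field_simp
    ring
  -- the inductive step via the barrier lemma
  have step : ∀ i, i < n →
      (∀ s ∈ Set.Ici (0:ℝ), ∃ Dj, HasDerivWithinAt (fun τ => R (i + 1) τ ^ γ) Dj (Set.Ici 0) s ∧
          -(γ * R (i + 1) s ^ γ / (γ + 1)) ≤ s * Dj) →
      ∀ t ∈ Set.Ici (0:ℝ), t * (R i t ^ γ - R (i + 1) t ^ γ) ≤ d i t / (γ + 1) := by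
    intro i hi hDj t ht
    set F : ℝ → ℝ := fun τ => τ * (R i τ ^ γ - R (i + 1) τ ^ γ) - d i τ / (γ + 1) with hFdef
    -- F has a derivative within Ici 0 everywhere
    have hFd : ∀ s ∈ Set.Ici (0:ℝ), ∀ Dj, HasDerivWithinAt (fun τ => R (i+1) τ ^ γ) Dj (Set.Ici 0) s →
        HasDerivWithinAt F
          (1 * (R i s ^ γ - R (i + 1) s ^ γ) +
            s * (-(γ * R i s ^ γ * (R i s ^ γ - R (i + 1) s ^ γ) / d i s) - Dj) -
            (R i s ^ γ - R (i + 1) s ^ γ) / (γ + 1)) (Set.Ici 0) s := by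
      intro s hs Dj hDjd
      exact ((hasDerivWithinAt_id s _).mul ((hRγ' i hi s hs).sub hDjd)).sub
        ((hd' i hi s hs).div_const (γ + 1))
    have hcont : ContinuousOn F (Set.Icc 0 t) := by
      have : ContinuousOn F (Set.Ici 0) := by
        intro s hs
        obtain ⟨Dj, hDjd, _⟩ := hDj s hs
        exact (hFd s hs Dj hDjd).continuousWithinAt
      exact this.mono (fun u hu => hu.1)
    -- F t ≤ ε for every ε > 0
    have hFt : ∀ ε, 0 < ε → F t ≤ ε := by
      intro ε hε
      apply barrier_lemma ht
      · have : F 0 = -(d i 0 / (γ + 1)) := by simp [hFdef]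
        rw [this]
        have := hd_pos i hi 0 Set.self_mem_Ici
        have : 0 < d i 0 / (γ + 1) := by positivity
        linarith
      · exact hcont
      · intro s hs0 hst hFs
        obtain ⟨Dj, hDjd, hDjb⟩ := hDj s (by exact hs0)
        refine ⟨_, ?_, hFd s hs0 Dj hDjd⟩
        -- show the derivative is negative
        set a := R i s ^ γ with ha
        set b := R (i + 1) s ^ γ with hb
        set dd := d i s with hdd
        have hddpos : 0 < dd := hd_pos i hi s hs0
        have hapos : 0 < a := Real.rpow_pos_of_pos (hR_pos i hi s hs0) γ
        have hbnn : 0 ≤ b := hRγ_nonneg (i + 1) hi s hs0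
        have hεs : s * (a - b) = dd / (γ + 1) + ε := by
          have : s * (a - b) - dd / (γ + 1) = ε := hFs
          linarith
        have key1 : s * (-(γ * a * (a - b) / dd)) = -(γ * a / (γ + 1)) - γ * a * ε / dd := by
          calc s * (-(γ * a * (a - b) / dd)) = -(γ * a / dd) * (s * (a - b)) := by ring
            _ = -(γ * a / dd) * (dd / (γ + 1) + ε) := by rw [hεs]
            _ = -(γ * a / (γ + 1)) - γ * a * ε / dd := by field_simp; ring
        have hzero : γ / (γ + 1) * (a - b) - γ * a / (γ + 1) + γ * b / (γ + 1) = 0 := by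
          ring
        have hΦ : 1 * (a - b) + s * (-(γ * a * (a - b) / dd) - Dj) - (a - b) / (γ + 1)
            = γ / (γ + 1) * (a - b) + s * (-(γ * a * (a - b) / dd)) - s * Dj := by
          field_simp
          ring
        rw [hΦ, key1]
        have hpos : 0 < γ * a * ε / dd := by positivity
        linarith [hDjb]
    by_contra hneg
    push_neg at hneg
    have hF : 0 < F t := by simp only [hFdef]; linarith
    have := hFt (F t / 2) (by linarith)
    linarith
  -- downward induction
  have main : ∀ k i, i < n → n ≤ i + 1 + k → ∀ t ∈ Set.Ici (0:ℝ),
      t * (R i t ^ γ - R (i + 1) t ^ γ) ≤ d i t / (γ + 1) := by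
    intro k
    induction k with
    | zero =>
      intro i hi hk t ht
      have hin : i + 1 = n := by omega
      apply step i hi _ t ht
      intro s hs
      refine ⟨0, ?_, ?_⟩
      · have : (fun τ => R (i + 1) τ ^ γ) = fun _ => (0:ℝ) := by
          funext τ; rw [hin, hRn, Real.zero_rpow hγ.ne']
        rw [this]; exact hasDerivWithinAt_const s _ 0
      · rw [hin, hRn, Real.zero_rpow hγ.ne']
        simp
    | succ k ih =>
      intro i hi hk t ht
      by_cases hin : i + 1 = n
      · apply step i hi _ t ht
        intro s hs
        refine ⟨0, ?_, ?_⟩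
        · have : (fun τ => R (i + 1) τ ^ γ) = fun _ => (0:ℝ) := by
            funext τ; rw [hin, hRn, Real.zero_rpow hγ.ne']
          rw [this]; exact hasDerivWithinAt_const s _ 0
        · rw [hin, hRn, Real.zero_rpow hγ.ne']
          simp
      · have hi1 : i + 1 < n := by omega
        apply step i hi _ t ht
        intro s hs
        refine ⟨_, hRγ' (i + 1) hi1 s hs, ?_⟩
        have IH := ih (i + 1) hi1 (by omega) s hs
        set b := R (i + 1) s ^ γ with hb
        set c := R (i + 2) s ^ γ with hc
        set dd := d (i + 1) s with hdd
        have hddpos : 0 < dd := hd_pos (i + 1) hi1 s hs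
        have hbnn : 0 ≤ b := hRγ_nonneg (i + 1) hi1.le s hs
        have h1 : γ * b / dd * (s * (b - c)) ≤ γ * b / dd * (dd / (γ + 1)) :=
          mul_le_mul_of_nonneg_left IH (by positivity)
        have h2 : γ * b / dd * (dd / (γ + 1)) = γ * b / (γ + 1) := by
          field_simp
        have h3 : s * (-(γ * b * (b - c) / dd)) = -(γ * b / dd * (s * (b - c))) := by ring
        rw [h3]
        rw [h2] at h1
        linarith
  -- conclude
  intro t ht i hi
  have hmain := main n i hi (by omega) t ht
  have hdd : 0 < d i t := hd_pos i hi t ht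
  have hxd : x (i + 1) t - x i t = d i t := rfl
  have hv : v (R (i + 1) t) - v (R i t) = R i t ^ γ - R (i + 1) t ^ γ := by
    rw [hvdef, hvdef]; ring
  constructor
  · rw [hxd]
    rw [div_le_div_iff₀ hdd hγ1]
    have h4 : t * (R i t ^ γ - R (i + 1) t ^ γ) * (γ + 1) ≤ d i t / (γ + 1) * (γ + 1) :=
      mul_le_mul_of_nonneg_right hmain hγ1.le
    rw [div_mul_cancel₀ _ hγ1.ne'] at h4
    calc t * (v (R (i + 1) t) - v (R i t)) * (γ + 1)
        = t * (R i t ^ γ - R (i + 1) t ^ γ) * (γ + 1) := by rw [hv]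
      _ ≤ d i t := h4
      _ = 1 * d i t := by ring
  · rw [hxd, div_le_one hdd]
    have h4 : t * (R i t ^ γ - R (i + 1) t ^ γ) * (γ + 1) ≤ d i t / (γ + 1) * (γ + 1) :=
      mul_le_mul_of_nonneg_right hmain hγ1.le
    rw [div_mul_cancel₀ _ hγ1.ne'] at h4
    calc t * (vmax - (γ + 1) * R (i + 1) t ^ γ - (vmax - (γ + 1) * R i t ^ γ))
        = t * (R i t ^ γ - R (i + 1) t ^ γ) * (γ + 1) := by ring
      _ ≤ d i t := h4
end

section
/- (Discrete maximum principle.) Let v be C¹ and non-increasing on [0,∞), and let x₀,…,x_n : [0,∞) → ℝ be a solution of the follow-the-leader system with x₀(0) < x₁(0) < … < x_n(0). Then for all t ≥ 0 and all k ∈ {0,…,n−1}, x_{k+1}(t) − x_k(t) ≥ min_{j=0,…,n−1} (x_{j+1}(0) − x_j(0)). In particular particles never collide and solutions exist globally in time. -/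
open MeasureTheory Set Filter Topology

/-- **Discrete maximum principle** for the follow-the-leader system (Proposition 4.1).
If `v` is `C¹` and non-increasing on `[0,∞)` and the particles are initially strictly
ordered, then for all `t ≥ 0` the gap between consecutive particles is bounded from below
by the smallest initial gap; in particular particles never collide. -/
theorem discrete_maximum_principle
    (v : ℝ → ℝ)
    (hv : ContDiffOn ℝ 1 v (Set.Ici 0))
    (hmono : AntitoneOn v (Set.Ici 0))
    (n : ℕ) (hn : 0 < n) (x : ℕ → ℝ → ℝ)
    -- follow-the-leader system: ẋ_i = v(R_i), R_i = (1/n)/(x_{i+1}-x_i), ẋ_n = v(0)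
    (hode : ∀ i < n, ∀ t ∈ Set.Ici (0:ℝ),
      HasDerivWithinAt (x i) (v ((1 / n) / (x (i + 1) t - x i t))) (Set.Ici 0) t)
    (hoden : ∀ t ∈ Set.Ici (0:ℝ), HasDerivWithinAt (x n) (v 0) (Set.Ici 0) t)
    -- strictly ordered initial positions
    (hinit : ∀ i < n, x i 0 < x (i + 1) 0) :
    ∀ t ∈ Set.Ici (0:ℝ), ∀ k < n,
      (Finset.range n).inf' (Finset.nonempty_range_iff.mpr hn.ne')
          (fun j => x (j + 1) 0 - x j 0)
        ≤ x (k + 1) t - x k t := by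
  intro T hT k hk
  by_contra hcon
  push_neg at hcon
  set m : ℝ := (Finset.range n).inf' (Finset.nonempty_range_iff.mpr hn.ne')
      (fun j => x (j + 1) 0 - x j 0) with hm
  have hm0 : 0 < m := by
    rw [hm, Finset.lt_inf'_iff]
    intro j hj
    show 0 < x (j + 1) 0 - x j 0
    have := hinit j (Finset.mem_range.mp hj)
    linarith
  have hmle : ∀ j < n, m ≤ x (j + 1) 0 - x j 0 := fun j hj =>
    Finset.inf'_le _ (Finset.mem_range.mpr hj)
  have hT0 : (0:ℝ) ≤ T := hT
  have hcx : ∀ i ≤ n, ContinuousOn (x i) (Set.Ici 0) := by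
    intro i hi
    rcases lt_or_eq_of_le hi with h | h
    · exact fun t ht => (hode i h t ht).continuousWithinAt
    · subst h
      exact fun t ht => (hoden t ht).continuousWithinAt
  -- choose the barrier slope ε
  set ε : ℝ := (min (m / 2) ((m - (x (k + 1) T - x k T)) / 2)) / (1 + T) with hε
  have h1T : (0:ℝ) < 1 + T := by linarith
  have hε0 : 0 < ε := by
    apply div_pos _ h1T
    apply lt_min
    · linarith
    · linarith
  have hεT1 : ε * (1 + T) ≤ m / 2 := by
    rw [hε, div_mul_cancel₀ _ h1T.ne']
    exact min_le_left _ _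
  have hεT2 : x (k + 1) T - x k T < m - ε * (1 + T) := by
    have h : ε * (1 + T) ≤ (m - (x (k + 1) T - x k T)) / 2 := by
      rw [hε, div_mul_cancel₀ _ h1T.ne']
      exact min_le_right _ _
    linarith
  -- the "bad set" B
  set B : Set ℝ := ⋃ j ∈ Finset.range n,
      (Set.Icc 0 T ∩ (fun t => x (j + 1) t - x j t + ε * (1 + t)) ⁻¹' Set.Iic m) with hB
  have hBmem : ∀ t, t ∈ B ↔ (t ∈ Set.Icc 0 T ∧
      ∃ j < n, x (j + 1) t - x j t ≤ m - ε * (1 + t)) := by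
    intro t
    simp only [hB, Set.mem_iUnion, Set.mem_inter_iff, Set.mem_preimage, Set.mem_Iic,
      Finset.mem_range, exists_prop]
    constructor
    · rintro ⟨j, hj, ht, hle⟩
      exact ⟨ht, j, hj, by linarith⟩
    · rintro ⟨ht, j, hj, hle⟩
      exact ⟨j, hj, ht, by linarith⟩
  have hBclosed : IsClosed B := by
    apply isClosed_biUnion_finset
    intro j hj
    have hj' : j < n := Finset.mem_range.mp hj
    apply ContinuousOn.preimage_isClosed_of_isClosed _ isClosed_Icc isClosed_Iic
    apply ContinuousOn.mono _ (Set.Icc_subset_Ici_self)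
    exact ((hcx (j + 1) hj').sub (hcx j hj'.le)).add
      (continuousOn_const.mul (continuousOn_const.add continuousOn_id))
  have hTB : T ∈ B := (hBmem T).mpr ⟨⟨hT0, le_refl T⟩, k, hk, hεT2.le⟩
  have hBne : B.Nonempty := ⟨T, hTB⟩
  have hBbdd : BddBelow B := ⟨0, fun t ht => ((hBmem t).mp ht).1.1⟩
  set τ : ℝ := sInf B with hτdef
  have hτB : τ ∈ B := hBclosed.csInf_mem hBne hBbdd
  obtain ⟨⟨hτ0, hτT⟩, k₀, hk₀n, hk₀le⟩ := (hBmem τ).mp hτB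
  have hbefore : ∀ t, 0 ≤ t → t < τ → ∀ j < n,
      m - ε * (1 + t) < x (j + 1) t - x j t := by
    intro t ht0 htτ j hj
    by_contra hle
    push_neg at hle
    have htB : t ∈ B := (hBmem t).mpr ⟨⟨ht0, htτ.le.trans hτT⟩, j, hj, hle⟩
    exact absurd (csInf_le hBbdd htB) (not_le.mpr htτ)
  have hτpos : 0 < τ := by
    rcases eq_or_lt_of_le hτ0 with h | h
    · exfalso
      have h2 := hmle k₀ hk₀n
      rw [← h] at hk₀le
      nlinarith
    · exact h
  -- the left approach filter
  have hL : (𝓝[Set.Ioo (0:ℝ) τ] τ).NeBot := by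
    rw [← mem_closure_iff_nhdsWithin_neBot, closure_Ioo hτpos.ne]
    exact ⟨hτpos.le, le_refl τ⟩
  have hLle : 𝓝[Set.Ioo (0:ℝ) τ] τ ≤ 𝓝[Set.Ici (0:ℝ)] τ :=
    nhdsWithin_mono τ (fun t ht => ht.1.le)
  -- all gaps at time τ are at least m - ε(1+τ)
  have hgeτ : ∀ j < n, m - ε * (1 + τ) ≤ x (j + 1) τ - x j τ := by
    intro j hj
    have h1 : Tendsto (fun t => m - ε * (1 + t)) (𝓝[Set.Ioo (0:ℝ) τ] τ)
        (𝓝 (m - ε * (1 + τ))) := by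
      apply Filter.Tendsto.mono_left _ nhdsWithin_le_nhds
      exact Continuous.tendsto (continuous_const.sub
        (continuous_const.mul (continuous_const.add continuous_id))) τ
    have h2 : Tendsto (fun t => x (j + 1) t - x j t) (𝓝[Set.Ioo (0:ℝ) τ] τ)
        (𝓝 (x (j + 1) τ - x j τ)) :=
      Filter.Tendsto.mono_left
        (((hcx (j + 1) hj).sub (hcx j hj.le)) τ (Set.mem_Ici.mpr hτpos.le)) hLle
    refine le_of_tendsto_of_tendsto h1 h2 ?_
    filter_upwards [self_mem_nhdsWithin] with t ht
    exact (hbefore t ht.1.le ht.2 j hj).le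
  have hc0 : 0 < m - ε * (1 + τ) := by
    have h : ε * (1 + τ) ≤ ε * (1 + T) :=
      mul_le_mul_of_nonneg_left (by linarith) hε0.le
    linarith
  have hk₀eq : x (k₀ + 1) τ - x k₀ τ = m - ε * (1 + τ) :=
    le_antisymm hk₀le (hgeτ k₀ hk₀n)
  have hτIci : τ ∈ Set.Ici (0:ℝ) := hτpos.le
  have hN : 0 < (1 : ℝ) / (n : ℝ) := one_div_pos.mpr (Nat.cast_pos.mpr hn)
  -- derivative of the leader x (k₀+1) is at least v((1/n)/(m - ε(1+τ)))
  have hd2 : ∃ w, HasDerivWithinAt (x (k₀ + 1)) w (Set.Ici 0) τ ∧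
      v ((1 / (n : ℝ)) / (m - ε * (1 + τ))) ≤ w := by
    rcases eq_or_lt_of_le (Nat.succ_le_of_lt hk₀n) with h | h
    · refine ⟨v 0, ?_, ?_⟩
      · have h' : k₀ + 1 = n := h
        rw [h']
        exact hoden τ hτIci
      · exact hmono Set.self_mem_Ici (Set.mem_Ici.mpr (div_pos hN hc0).le)
          (div_pos hN hc0).le
    · refine ⟨v ((1 / (n : ℝ)) / (x (k₀ + 1 + 1) τ - x (k₀ + 1) τ)),
        hode (k₀ + 1) h τ hτIci, ?_⟩
      have hg1 : m - ε * (1 + τ) ≤ x (k₀ + 1 + 1) τ - x (k₀ + 1) τ := hgeτ (k₀ + 1) h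
      have hdiv : (1 / (n : ℝ)) / (x (k₀ + 1 + 1) τ - x (k₀ + 1) τ) ≤
          (1 / (n : ℝ)) / (m - ε * (1 + τ)) :=
        div_le_div_of_nonneg_left hN.le hc0 hg1
      exact hmono (Set.mem_Ici.mpr (div_nonneg hN.le (hc0.le.trans hg1)))
        (Set.mem_Ici.mpr (div_nonneg hN.le hc0.le)) hdiv
  obtain ⟨w, hw, hwge⟩ := hd2
  have hd1 : HasDerivWithinAt (x k₀) (v ((1 / (n : ℝ)) / (m - ε * (1 + τ))))
      (Set.Ici 0) τ := by
    have h := hode k₀ hk₀n τ hτIci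
    rwa [hk₀eq] at h
  have hgd : HasDerivWithinAt (fun t => x (k₀ + 1) t - x k₀ t)
      (w - v ((1 / (n : ℝ)) / (m - ε * (1 + τ)))) (Set.Ici 0) τ := hw.sub hd1
  have hdpos : 0 ≤ w - v ((1 / (n : ℝ)) / (m - ε * (1 + τ))) := sub_nonneg.mpr hwge
  -- but the slope from the left is at most -ε
  have hslope : Tendsto (slope (fun t => x (k₀ + 1) t - x k₀ t) τ)
      (𝓝[Set.Ioo (0:ℝ) τ] τ)
      (𝓝 (w - v ((1 / (n : ℝ)) / (m - ε * (1 + τ))))) := by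
    apply Filter.Tendsto.mono_left (hasDerivWithinAt_iff_tendsto_slope.mp hgd)
    apply nhdsWithin_mono
    intro t ht
    exact ⟨ht.1.le, by simp [ht.2.ne]⟩
  have hfinal : w - v ((1 / (n : ℝ)) / (m - ε * (1 + τ))) ≤ -ε := by
    refine le_of_tendsto hslope ?_
    filter_upwards [self_mem_nhdsWithin] with t ht
    have h1 : m - ε * (1 + t) < x (k₀ + 1) t - x k₀ t := hbefore t ht.1.le ht.2 k₀ hk₀n
    have h2 : (0:ℝ) < τ - t := by linarith [ht.2]
    have h2' : t - τ < 0 := by linarith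
    rw [slope_def_field, div_le_iff_of_neg h2']
    nlinarith [hk₀eq]
  linarith
end

section
/- (Uniform L∞ bound.) Let v be C¹ and non-increasing on [0,∞), and let x₀,…,x_n : [0,∞) → ℝ solve the follow-the-leader system with x₀(0) < x₁(0) < … < x_n(0). Then for all t ≥ 0 and all i ∈ {0,…,n−1}, R_i(t) ≤ max_{j=0,…,n−1} R_j(0). Consequently, if R_j(0) ≤ R̄ for all j, then ‖ρⁿ(·,t)‖_{L∞(ℝ)} ≤ R̄ for all t ≥ 0. -/
open MeasureTheory Set Filter Topology

/-- The discrete forward-difference density `R_i(t) = (1/n)/(x_{i+1}(t) - x_i(t))`. -/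
noncomputable def Rden (n : ℕ) (x : ℕ → ℝ → ℝ) (i : ℕ) (t : ℝ) : ℝ :=
  (1 / n) / (x (i + 1) t - x i t)

/-- The discrete (piecewise constant) density
`ρⁿ(y,t) = Σ_{i<n} R_i(t) · 1_{[x_i(t), x_{i+1}(t))}(y)`. -/
noncomputable def discDens (n : ℕ) (x : ℕ → ℝ → ℝ) (y t : ℝ) : ℝ :=
  ∑ i ∈ Finset.range n,
    Set.indicator (Set.Ico (x i t) (x (i + 1) t)) (fun _ => Rden n x i t) y

/-- **Uniform L∞ bound** for the follow-the-leader scheme.  If `v` is `C¹` and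
non-increasing on `[0,∞)` and the initial positions are strictly ordered, then each
`R_i(t)` is bounded by the largest initial value `max_j R_j(0)`; consequently, if
`R_j(0) ≤ R̄` for all `j`, then `‖ρⁿ(·,t)‖_{L∞} ≤ R̄` for all `t ≥ 0`. -/
theorem uniform_Linfty_bound
    (v : ℝ → ℝ)
    (hv : ContDiffOn ℝ 1 v (Set.Ici 0))
    (hmono : AntitoneOn v (Set.Ici 0))
    (n : ℕ) (hn : 0 < n) (x : ℕ → ℝ → ℝ)
    (hode : ∀ i < n, ∀ t ∈ Set.Ici (0:ℝ),
      HasDerivWithinAt (x i) (v (Rden n x i t)) (Set.Ici 0) t)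
    (hoden : ∀ t ∈ Set.Ici (0:ℝ), HasDerivWithinAt (x n) (v 0) (Set.Ici 0) t)
    (hinit : ∀ i < n, x i 0 < x (i + 1) 0) :
    (∀ t ∈ Set.Ici (0:ℝ), ∀ i < n,
      Rden n x i t ≤ (Finset.range n).sup' (Finset.nonempty_range_iff.mpr hn.ne')
        (fun j => Rden n x j 0)) ∧
    (∀ Rb : ℝ, (∀ j < n, Rden n x j 0 ≤ Rb) →
      ∀ t ∈ Set.Ici (0:ℝ), ∀ y : ℝ, discDens n x y t ≤ Rb) := by
  classical
  have hne : (Finset.range n).Nonempty := Finset.nonempty_range_iff.mpr hn.ne'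
  -- gap functions
  set d : ℕ → ℝ → ℝ := fun i t => x (i + 1) t - x i t with hd
  set g : ℕ → ℝ → ℝ := fun i t => x i t - x (i + 1) t with hg
  set δ : ℝ := (Finset.range n).inf' hne (fun j => d j 0) with hδdef
  have hδpos : 0 < δ := by
    rw [hδdef, Finset.lt_inf'_iff]
    intro j hj
    simpa [hd] using sub_pos.mpr (hinit j (Finset.mem_range.mp hj))
  have hδle : ∀ j < n, δ ≤ d j 0 := fun j hj =>
    Finset.inf'_le _ (Finset.mem_range.mpr hj)
  -- velocities
  set W : ℕ → ℝ → ℝ := fun i t => if i < n then v (Rden n x i t) else v 0 with hW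
  have hxderiv : ∀ i ≤ n, ∀ t ∈ Set.Ici (0:ℝ),
      HasDerivWithinAt (x i) (W i t) (Set.Ici 0) t := by
    intro i hi t ht
    rcases lt_or_eq_of_le hi with h | h
    · simpa [hW, h] using hode i h t ht
    · subst h
      simpa [hW, lt_irrefl] using hoden t ht
  have hxcont : ∀ i ≤ n, ContinuousOn (x i) (Set.Ici 0) := fun i hi t ht =>
    (hxderiv i hi t ht).continuousWithinAt
  have hgderiv : ∀ i < n, ∀ t ∈ Set.Ici (0:ℝ),
      HasDerivWithinAt (g i) (W i t - W (i + 1) t) (Set.Ici 0) t := by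
    intro i hi t ht
    exact (hxderiv i hi.le t ht).sub (hxderiv (i + 1) hi t ht)
  have hgcont : ∀ i ∈ Finset.range n, ContinuousOn (g i) (Set.Ici 0) := by
    intro i hi
    exact (hxcont i (Finset.mem_range.mp hi).le).sub
      (hxcont (i + 1) (Finset.mem_range.mp hi))
  -- the maximal negative gap
  set f : ℝ → ℝ := fun t => (Finset.range n).sup' hne (fun i => g i t) with hf
  have hfcont : ContinuousOn f (Set.Ici 0) :=
    ContinuousOn.finset_sup'_apply hne hgcont
  have hgle : ∀ t, ∀ j < n, g j t ≤ f t := fun t j hj =>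
    Finset.le_sup' (fun i => g i t) (Finset.mem_range.mpr hj)
  -- set of minimizers
  have hSne : ∀ t, ((Finset.range n).filter (fun i => g i t = f t)).Nonempty := by
    intro t
    obtain ⟨i, hi, hieq⟩ := Finset.exists_mem_eq_sup' hne (fun i => g i t)
    exact ⟨i, Finset.mem_filter.mpr ⟨hi, hieq.symm⟩⟩
  set F : ℝ → ℝ := fun t =>
    ((Finset.range n).filter (fun i => g i t = f t)).sup' (hSne t)
      (fun i => W i t - W (i + 1) t) with hF
  -- the liminf slope of `f` is bounded by `F`
  have hslope : ∀ t ∈ Set.Ici (0:ℝ), ∀ r, F t < r →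
      ∀ᶠ z in 𝓝[>] t, slope f t z < r := by
    intro t ht r hr
    have hsub : Set.Ioi t ⊆ Set.Ici (0:ℝ) := fun z hz => Set.mem_Ici.mpr (le_trans (Set.mem_Ici.mp ht) hz.le)
    have hle : 𝓝[>] t ≤ 𝓝[Set.Ici 0] t := nhdsWithin_mono t hsub
    have key : ∀ j ∈ Finset.range n, ∀ᶠ z in 𝓝[>] t, g j z - r * (z - t) < f t := by
      intro j hj
      have hjn : j < n := Finset.mem_range.mp hj
      by_cases hjS : g j t = f t
      · -- minimizer: use the derivative
        have hd' : HasDerivWithinAt (g j) (W j t - W (j + 1) t) (Set.Ioi t) t :=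
          (hgderiv j hjn t ht).mono hsub
        have hts : Tendsto (slope (g j) t) (𝓝[>] t) (𝓝 (W j t - W (j + 1) t)) :=
          (hasDerivWithinAt_iff_tendsto_slope' (lt_irrefl t)).1 hd'
        have hWle : W j t - W (j + 1) t < r :=
          lt_of_le_of_lt
            (Finset.le_sup' (f := fun i => W i t - W (i + 1) t)
              (Finset.mem_filter.mpr ⟨hj, hjS⟩)) hr
        have hev : ∀ᶠ z in 𝓝[>] t, slope (g j) t z < r :=
          hts.eventually (Filter.Tendsto.eventually_lt_const hWle tendsto_id) |>.mono
            (fun z hz => hz)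
        filter_upwards [hev, self_mem_nhdsWithin] with z hz hzt
        rw [slope_def_field] at hz
        have hzt' : (0:ℝ) < z - t := sub_pos.mpr hzt
        have : g j z - g j t < r * (z - t) := by
          have := (div_lt_iff₀ hzt').1 hz
          linarith
        linarith [hjS.ge, hjS.le]
      · have hlt : g j t < f t := lt_of_le_of_ne (hgle t j hjn) hjS
        have hcz : Tendsto (fun z => g j z - r * (z - t)) (𝓝[>] t)
            (𝓝 (g j t - r * (t - t))) := by
          have h1 : Tendsto (g j) (𝓝[>] t) (𝓝 (g j t)) :=
            (hgcont j hj t ht).mono hsub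
          exact h1.sub (((tendsto_id.sub_const t).const_mul r).mono_left
            nhdsWithin_le_nhds)
        have : Tendsto (fun z => g j z - r * (z - t)) (𝓝[>] t) (𝓝 (g j t)) := by
          simpa using hcz
        exact this.eventually (Filter.Tendsto.eventually_lt_const hlt tendsto_id) |>.mono
          (fun z hz => hz)
    have hall : ∀ᶠ z in 𝓝[>] t, ∀ j ∈ Finset.range n, g j z - r * (z - t) < f t :=
      (Finset.range n).eventually_all.mpr key
    filter_upwards [hall, self_mem_nhdsWithin] with z hz hzt
    rw [slope_def_field, div_lt_iff₀ (sub_pos.mpr hzt)]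
    have hfz : f z < f t + r * (z - t) := by
      rw [hf, Finset.sup'_lt_iff]
      intro i hi
      have := hz i hi
      linarith
    linarith
  -- at a touching point with negative `f`, all minimizer derivatives are ≤ 0
  have htouch : ∀ t ∈ Set.Ici (0:ℝ), f t < 0 → F t ≤ 0 := by
    intro t ht hft
    rw [hF, Finset.sup'_le_iff]
    intro i hiS
    obtain ⟨hi, hieq⟩ := Finset.mem_filter.mp hiS
    have hin : i < n := Finset.mem_range.mp hi
    have hgdt : ∀ j, g j t = -(d j t) := by intro j; simp [hg, hd]
    have hdit : 0 < d i t := by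
      have h3 := hgdt i
      linarith [hieq, hft]
    have hdj : ∀ j < n, d i t ≤ d j t := by
      intro j hj
      have h1 := hgle t j hj
      have h2 := hgdt j
      have h3 := hgdt i
      linarith [hieq]
    have hnpos : (0:ℝ) < 1 / n := by
      have : (0:ℝ) < n := Nat.cast_pos.mpr hn
      positivity
    have hRdef : ∀ j, Rden n x j t = (1 / n) / d j t := by
      intro j; rw [Rden, hd]
    have hRipos : 0 < Rden n x i t := by
      rw [hRdef]; exact div_pos hnpos hdit
    have hWi : W i t = v (Rden n x i t) := by rw [hW]; simp [hin]
    obtain ⟨s, hs0, hsle, hWs⟩ : ∃ s, 0 ≤ s ∧ s ≤ Rden n x i t ∧ W (i + 1) t = v s := by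
      by_cases h1 : i + 1 < n
      · refine ⟨Rden n x (i + 1) t, ?_, ?_, by rw [hW]; simp [h1]⟩
        · rw [hRdef]
          exact (div_pos hnpos (lt_of_lt_of_le hdit (hdj _ h1))).le
        · rw [hRdef, hRdef]
          exact div_le_div_of_nonneg_left hnpos.le hdit (hdj _ h1)
      · exact ⟨0, le_rfl, hRipos.le, by rw [hW]; simp [h1]⟩
    have hvle : v (Rden n x i t) ≤ v s :=
      hmono (Set.mem_Ici.mpr hs0) (Set.mem_Ici.mpr hRipos.le) hsle
    rw [hWi, hWs]
    linarith
  -- Grönwall-type argument: `f t ≤ -δ` for all `t ≥ 0`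
  have hf0 : f 0 ≤ -δ := by
    rw [hf, Finset.sup'_le_iff]
    intro j hj
    have := hδle j (Finset.mem_range.mp hj)
    simp only [hg, hd] at this ⊢
    linarith
  have hgap : ∀ t ∈ Set.Ici (0:ℝ), f t ≤ -δ := by
    intro t ht
    rcases eq_or_lt_of_le (Set.mem_Ici.mp ht) with h0 | h0
    · rw [← h0]; exact hf0
    · refine le_of_forall_pos_le_add ?_
      intro c hc
      set ε : ℝ := min (c / t) (δ / t) with hε
      have hεpos : 0 < ε := lt_min (div_pos hc h0) (div_pos hδpos h0)
      have hεtδ : ε * t ≤ δ := by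
        calc ε * t ≤ (δ / t) * t := by
              exact mul_le_mul_of_nonneg_right (min_le_right _ _) h0.le
          _ = δ := div_mul_cancel₀ _ h0.ne'
      have hεtc : ε * t ≤ c := by
        calc ε * t ≤ (c / t) * t := by
              exact mul_le_mul_of_nonneg_right (min_le_left _ _) h0.le
          _ = c := div_mul_cancel₀ _ h0.ne'
      have key : ∀ z ∈ Set.Icc (0:ℝ) t, f z ≤ -δ + ε * z := by
        apply image_le_of_liminf_slope_right_lt_deriv_boundary'
          (f := f) (f' := F) (B := fun z => -δ + ε * z) (B' := fun _ => ε)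
        · exact hfcont.mono (Set.Icc_subset_Ici_self)
        · intro z hz r hr
          exact ((hslope z hz.1 r hr).frequently)
        · simpa using hf0
        · exact (continuousOn_const.add (continuousOn_const.mul continuousOn_id))
        · intro z hz
          simpa using (((hasDerivWithinAt_id z (Set.Ici z)).const_mul ε).const_add (-δ))
        · intro z hz hfz
          have hzlt : z < t := hz.2
          have hεz : ε * z < δ := by
            have : ε * z < ε * t := by
              exact mul_lt_mul_of_pos_left hzlt hεpos
            linarith
          have hfzneg : f z < 0 := by rw [hfz]; linarith
          exact lt_of_le_of_lt (htouch z hz.1 hfzneg) hεpos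
      have := key t (Set.right_mem_Icc.mpr h0.le)
      linarith
  -- gaps stay bounded below
  have hdge : ∀ t ∈ Set.Ici (0:ℝ), ∀ j < n, δ ≤ d j t := by
    intro t ht j hj
    have h1 := hgle t j hj
    have h2 := hgap t ht
    simp only [hg, hd] at h1 ⊢
    rw [hf] at h1
    linarith [h1.trans h2]
  have hnpos : (0:ℝ) < 1 / n := by
    have : (0:ℝ) < n := Nat.cast_pos.mpr hn
    positivity
  have hRdeft : ∀ j t, Rden n x j t = (1 / n) / d j t := by
    intro j t; rw [Rden, hd]
  -- Part 1
  obtain ⟨j0, hj0, hj0eq⟩ := Finset.exists_mem_eq_inf' hne (fun j => d j 0)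
  have hpart1 : ∀ t ∈ Set.Ici (0:ℝ), ∀ i < n,
      Rden n x i t ≤ (Finset.range n).sup' hne (fun j => Rden n x j 0) := by
    intro t ht i hi
    have h2 : Rden n x i t ≤ (1 / n) / δ := by
      rw [hRdeft]
      exact div_le_div_of_nonneg_left hnpos.le hδpos (hdge t ht i hi)
    refine h2.trans ?_
    have h3 : (1 / (n:ℝ)) / δ = Rden n x j0 0 := by
      rw [hRdeft, hδdef, hj0eq]
    rw [h3]
    exact Finset.le_sup' (fun j => Rden n x j 0) hj0
  refine ⟨hpart1, ?_⟩
  intro Rb hRb t ht y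
  have hRbpos : 0 < Rb := by
    refine lt_of_lt_of_le ?_ (hRb 0 hn)
    rw [hRdeft]
    refine div_pos hnpos ?_
    have := hδle 0 hn
    linarith
  have hmonox : ∀ a b : ℕ, a ≤ b → b ≤ n → x a t ≤ x b t := by
    intro a b hab hbn
    induction b with
    | zero => rw [Nat.le_zero.mp hab]
    | succ m ih =>
      rcases eq_or_lt_of_le hab with h | h
      · rw [h]
      · have ham : a ≤ m := Nat.lt_succ_iff.mp h
        have h1 : x a t ≤ x m t := ih ham (le_trans (Nat.le_succ m) hbn)
        have h2 : δ ≤ d m t := hdge t ht m (Nat.lt_of_succ_le hbn)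
        rw [hd] at h2
        simp only at h2
        linarith
  rw [discDens]
  by_cases hy : ∃ i ∈ Finset.range n, y ∈ Set.Ico (x i t) (x (i + 1) t)
  · obtain ⟨i, hi, hyi⟩ := hy
    have hin : i < n := Finset.mem_range.mp hi
    rw [Finset.sum_eq_single_of_mem i hi ?_]
    · rw [Set.indicator_of_mem hyi]
      refine (hpart1 t ht i hin).trans ?_
      rw [Finset.sup'_le_iff]
      intro j hj
      exact hRb j (Finset.mem_range.mp hj)
    · intro j hj hji
      apply Set.indicator_of_notMem
      intro hyj
      have hjn : j < n := Finset.mem_range.mp hj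
      rcases lt_or_gt_of_ne hji with h | h
      · have h1 : x (j + 1) t ≤ x i t := hmonox (j + 1) i h hin.le
        have h2 : y < x (j + 1) t := hyj.2
        have h3 : x i t ≤ y := hyi.1
        linarith
      · have h1 : x (i + 1) t ≤ x j t := hmonox (i + 1) j h hjn.le
        have h2 : x j t ≤ y := hyj.1
        have h3 : y < x (i + 1) t := hyi.2
        linarith
  · rw [Finset.sum_eq_zero]
    · exact hRbpos.le
    · intro i hi
      exact Set.indicator_of_notMem (fun h => hy ⟨i, hi, h⟩) _
end

section
/- (One-sided Lipschitz estimate, general case.) Assume v satisfies (V1) and (V2) on [0,R̄], and let x₀,…,x_n solve the follow-the-leader system with strictly ordered initial positions and with R_i(t) ∈ [0,R̄] for all i and t. Then for all t ≥ 0, all n ∈ ℕ, and all i ∈ {0,…,n−1}, t·(v(R_{i+1}(t)) − v(R_i(t)))/(x_{i+1}(t) − x_i(t)) ≤ 1, with the convention R_n(t) := 0. -/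
open MeasureTheory Set Filter Topology

/-- **One-sided Lipschitz estimate, general case** (Proposition 4.2 of the paper).
Under assumptions (V1) and (V2), the follow-the-leader approximation satisfies
`t (v(R_{i+1}(t)) - v(R_i(t))) / (x_{i+1}(t) - x_i(t)) ≤ 1` for all `t ≥ 0` and all
`i ∈ {0,…,n-1}`, with the convention `R_n(t) = 0`. -/
theorem one_sided_lipschitz_general
    (Rb : ℝ) (hRbpos : 0 < Rb) (v vd : ℝ → ℝ)
    -- (V1): v ∈ C¹([0,R̄]) with derivative vd, strictly decreasing
    (hv1 : ∀ r ∈ Set.Icc (0:ℝ) Rb, HasDerivWithinAt v (vd r) (Set.Icc 0 Rb) r)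
    (hv1c : ContinuousOn vd (Set.Icc 0 Rb))
    (hanti : StrictAntiOn v (Set.Icc 0 Rb))
    -- (V2): 0 ≤ (φ(ρ)-φ(σ))/(v(ρ)-v(σ)) ≤ K with φ(r) = r v'(r)
    (hv2 : ∃ K : ℝ, 0 ≤ K ∧ ∀ r ∈ Set.Icc (0:ℝ) Rb, ∀ s ∈ Set.Icc (0:ℝ) Rb, r ≠ s →
      0 ≤ (r * vd r - s * vd s) / (v r - v s) ∧
      (r * vd r - s * vd s) / (v r - v s) ≤ K)
    (n : ℕ) (hn : 0 < n) (x : ℕ → ℝ → ℝ)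
    (R : ℕ → ℝ → ℝ)
    -- R_i(t) = (1/n)/(x_{i+1}(t) - x_i(t)) for i < n, and R_n(t) = 0
    (hRdef : ∀ i t, R i t = if i < n then (1 / n) / (x (i + 1) t - x i t) else 0)
    -- strictly ordered particles
    (horder : ∀ t ∈ Set.Ici (0:ℝ), ∀ i < n, x i t < x (i + 1) t)
    -- densities remain in [0, R̄]
    (hrange : ∀ i, ∀ t ∈ Set.Ici (0:ℝ), R i t ∈ Set.Icc 0 Rb)
    -- follow-the-leader system
    (hode : ∀ i < n, ∀ t ∈ Set.Ici (0:ℝ),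
      HasDerivWithinAt (x i) (v (R i t)) (Set.Ici 0) t)
    (hoden : ∀ t ∈ Set.Ici (0:ℝ), HasDerivWithinAt (x n) (v 0) (Set.Ici 0) t) :
    ∀ t ∈ Set.Ici (0:ℝ), ∀ i < n,
      t * (v (R (i + 1) t) - v (R i t)) / (x (i + 1) t - x i t) ≤ 1 := by
  classical
  -- basic facts
  have hRn : ∀ t, R n t = 0 := fun t => by rw [hRdef]; simp
  set y : ℕ → ℝ → ℝ := fun i t => x (i+1) t - x i t with hydef
  set w : ℕ → ℝ → ℝ := fun i t => v (R (i+1) t) - v (R i t) with hwdef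
  set Z : ℕ → ℝ → ℝ := fun j t => if j < n then w j t / y j t else 0 with hZdef
  have hypos : ∀ i < n, ∀ t ∈ Ici (0:ℝ), 0 < y i t := by
    intro i hi t ht
    simp only [hydef]
    exact sub_pos.2 (horder t ht i hi)
  obtain ⟨K, hK0, hKb⟩ := hv2
  -- φ(r) = r vd r ≤ 0 on [0, Rb]
  have hphi : ∀ r ∈ Icc (0:ℝ) Rb, r * vd r ≤ 0 := by
    intro r hr
    rcases eq_or_lt_of_le hr.1 with h0 | h0
    · rw [← h0]; simp
    · have hmem0 : (0:ℝ) ∈ Icc (0:ℝ) Rb := ⟨le_refl _, hRbpos.le⟩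
      have hvlt : v r < v 0 := hanti hmem0 hr h0
      have h1 := (hKb r hr 0 hmem0 (ne_of_gt h0)).1
      simp only [zero_mul, sub_zero] at h1
      by_contra hpos
      push_neg at hpos
      have : (r * vd r) / (v r - v 0) < 0 := div_neg_of_pos_of_neg hpos (by linarith)
      linarith
  -- φ monotone along v: v r < v s → φ r ≤ φ s
  have hphidiff : ∀ r ∈ Icc (0:ℝ) Rb, ∀ s ∈ Icc (0:ℝ) Rb, v r < v s → r * vd r ≤ s * vd s := by
    intro r hr s hs hv
    have hrs : r ≠ s := fun h => by rw [h] at hv; exact lt_irrefl _ hv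
    have h1 := (hKb r hr s hs hrs).1
    by_contra hpos
    push_neg at hpos
    have : (r * vd r - s * vd s) / (v r - v s) < 0 :=
      div_neg_of_pos_of_neg (by linarith) (by linarith)
    linarith
  -- derivatives of x
  have hxder : ∀ j ≤ n, ∀ t ∈ Ici (0:ℝ), HasDerivWithinAt (x j) (v (R j t)) (Ici 0) t := by
    intro j hj t ht
    rcases lt_or_eq_of_le hj with h | h
    · exact hode j h t ht
    · subst h; rw [hRn]; exact hoden t ht
  have hyder : ∀ i < n, ∀ t ∈ Ici (0:ℝ), HasDerivWithinAt (y i) (w i t) (Ici 0) t := by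
    intro i hi t ht
    have h := (hxder (i+1) hi t ht).sub (hxder i hi.le t ht)
    simp only [hydef, hwdef]
    exact h
  have hRderv : ∀ j < n, ∀ t ∈ Ici (0:ℝ),
      HasDerivWithinAt (R j) ((1/(n:ℝ)) * (-(w j t) / (y j t)^2)) (Ici 0) t := by
    intro j hj t ht
    have hfun : R j = fun s => (1/(n:ℝ)) * (y j s)⁻¹ := by
      funext s; rw [hRdef, if_pos hj, div_eq_mul_inv]
    rw [hfun]
    exact ((hyder j hj t ht).inv (hypos j hj t ht).ne').const_mul (1/(n:ℝ))
  -- derivative of t ↦ v (R j t)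
  have hWder : ∀ j ≤ n, ∀ t ∈ Ici (0:ℝ),
      HasDerivWithinAt (fun s => v (R j s)) (-(R j t * vd (R j t) * Z j t)) (Ici 0) t := by
    intro j hj t ht
    rcases lt_or_eq_of_le hj with h | h
    · have hcomp := (hv1 (R j t) (hrange j t ht)).comp t (hRderv j h t ht)
        (fun s hs => hrange j s hs)
      convert hcomp using 1
      · rfl
      · rfl
      · rfl
      have hyne : y j t ≠ 0 := (hypos j h t ht).ne'
      have hR : R j t = (1/(n:ℝ)) / (y j t) := by
        rw [hRdef, if_pos h]
      have hZj : Z j t = w j t / y j t := by simp only [hZdef]; rw [if_pos h]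
      have hn0 : (n:ℝ) ≠ 0 := Nat.cast_ne_zero.mpr hn.ne'
      rw [hZj, hR]
      generalize vd (1/(n:ℝ) / y j t) = a
      field_simp
    · rw [h]
      have hZn : Z n t = 0 := by simp only [hZdef]; rw [if_neg (lt_irrefl n)]
      simp only [hRn, hZn, zero_mul, mul_zero, neg_zero]
      exact hasDerivWithinAt_const t _ (v 0)
  have hwder : ∀ i < n, ∀ t ∈ Ici (0:ℝ),
      HasDerivWithinAt (w i)
        (R i t * vd (R i t) * Z i t - R (i+1) t * vd (R (i+1) t) * Z (i+1) t) (Ici 0) t := by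
    intro i hi t ht
    have h := (hWder (i+1) hi t ht).sub (hWder i hi.le t ht)
    simp only [hwdef]
    convert h using 1
    · rfl
    · rfl
    · rfl
    ring
  have hycont : ∀ i < n, ContinuousOn (y i) (Ici 0) :=
    fun i hi t ht => (hyder i hi t ht).continuousWithinAt
  have hwcont : ∀ i < n, ContinuousOn (w i) (Ici 0) :=
    fun i hi t ht => (hwder i hi t ht).continuousWithinAt
  -- now the main argument
  intro t0 ht0 i0 hi0
  have hy0 : 0 < y i0 t0 := hypos i0 hi0 t0 ht0
  have key : ∀ ε > (0:ℝ), ∀ t ∈ Icc (0:ℝ) t0, ∀ i < n, t * w i t < (1+ε) * y i t := by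
    intro ε hε
    by_contra hcon
    push_neg at hcon
    obtain ⟨t1, ht1, i1, hi1, hge1⟩ := hcon
    set f : ℕ → ℝ → ℝ := fun j t => (1+ε) * y j t - t * w j t with hfdef
    have hfcont : ∀ j < n, ContinuousOn (f j) (Icc 0 t0) := by
      intro j hj
      have h1 : ContinuousOn (y j) (Icc 0 t0) := (hycont j hj).mono Icc_subset_Ici_self
      have h2 : ContinuousOn (w j) (Icc 0 t0) := (hwcont j hj).mono Icc_subset_Ici_self
      simp only [hfdef]
      exact (continuousOn_const.mul h1).sub (continuousOn_id.mul h2)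
    set S : Set ℝ := ⋃ j ∈ Iio n, (Icc 0 t0 ∩ f j ⁻¹' Iic 0) with hSdef
    have hSne : S.Nonempty := by
      refine ⟨t1, mem_iUnion₂.2 ⟨i1, hi1, ht1, ?_⟩⟩
      simp only [mem_preimage, mem_Iic, hfdef]
      linarith
    have hSclosed : IsClosed S := by
      refine Set.Finite.isClosed_biUnion (finite_Iio n) ?_
      intro j hj
      exact (hfcont j hj).preimage_isClosed_of_isClosed isClosed_Icc isClosed_Iic
    have hSbdd : BddBelow S := by
      refine ⟨0, fun t ht => ?_⟩
      obtain ⟨j, hj, htmem⟩ := mem_iUnion₂.1 ht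
      exact htmem.1.1
    set ts := sInf S with hts
    have htsS : ts ∈ S := hSclosed.csInf_mem hSne hSbdd
    obtain ⟨i, hiR, htmem⟩ := mem_iUnion₂.1 htsS
    have htIcc : ts ∈ Icc (0:ℝ) t0 := htmem.1
    have hfle : f i ts ≤ 0 := htmem.2
    have hilt : i < n := hiR
    have htsIci : ts ∈ Ici (0:ℝ) := htIcc.1
    have hyts : 0 < y i ts := hypos i hilt ts htsIci
    have hiR' : i ∈ Iio n := hiR
    have hts0 : 0 < ts := by
      rcases htIcc.1.lt_or_eq with h | h
      · exact h
      · exfalso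
        rw [← h] at hfle
        simp only [hfdef, zero_mul, sub_zero] at hfle
        have hy00 : 0 < y i 0 := hypos i hilt 0 self_mem_Ici
        nlinarith
    -- before ts everything is strict
    have hnotS : ∀ t ∈ Ico (0:ℝ) ts, ∀ j < n, 0 < f j t := by
      intro t ht j hj
      by_contra hle
      push_neg at hle
      have hmem : t ∈ S := mem_iUnion₂.2 ⟨j, hj, ⟨⟨ht.1, ht.2.le.trans htIcc.2⟩, hle⟩⟩
      exact absurd (csInf_le hSbdd hmem) (not_le.2 ht.2)
    have hclos : ts ∈ closure (Ico (0:ℝ) ts) := by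
      rw [closure_Ico hts0.ne]
      exact ⟨htIcc.1, le_refl _⟩
    haveI hfilter : (𝓝[Ico (0:ℝ) ts] ts).NeBot := mem_closure_iff_nhdsWithin_neBot.1 hclos
    have hfge : ∀ j < n, 0 ≤ f j ts := by
      intro j hj
      have hcw : ContinuousWithinAt (f j) (Ico 0 ts) ts :=
        ((hfcont j hj) ts htIcc).mono (fun s hs => ⟨hs.1, hs.2.le.trans htIcc.2⟩)
      exact ge_of_tendsto hcw (eventually_nhdsWithin_of_forall (fun s hs => (hnotS s hs j hj).le))
    have hfeq : f i ts = 0 := le_antisymm hfle (hfge i hilt)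
    have hfeq' : (1+ε) * y i ts - ts * w i ts = 0 := by
      have h := hfeq; simp only [hfdef] at h; exact h
    have hwts : 0 < w i ts := by nlinarith
    have hZiA : Z i ts = (1+ε)/ts := by
      simp only [hZdef, if_pos hilt]
      rw [div_eq_div_iff hyts.ne' hts0.ne']
      linarith
    have hZnext : Z (i+1) ts ≤ (1+ε)/ts := by
      by_cases h : i+1 < n
      · have hy2 : 0 < y (i+1) ts := hypos _ h ts htsIci
        have hf2 : 0 ≤ f (i+1) ts := hfge _ h
        simp only [hfdef] at hf2
        simp only [hZdef, if_pos h]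
        rw [div_le_div_iff₀ hy2 hts0]
        linarith
      · simp only [hZdef, if_neg h]
        positivity
    have hZi0 : 0 < Z i ts := by rw [hZiA]; positivity
    have hvlt : v (R i ts) < v (R (i+1) ts) := by
      have hww : v (R (i+1) ts) - v (R i ts) = w i ts := by simp only [hwdef]
      linarith
    have hp2 : R (i+1) ts * vd (R (i+1) ts) ≤ 0 := hphi _ (hrange (i+1) ts htsIci)
    have hp12 : R i ts * vd (R i ts) ≤ R (i+1) ts * vd (R (i+1) ts) :=
      hphidiff _ (hrange i ts htsIci) _ (hrange (i+1) ts htsIci) hvlt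
    have hZd : 0 ≤ Z i ts - Z (i+1) ts := by rw [hZiA]; linarith
    have hDw : R i ts * vd (R i ts) * Z i ts - R (i+1) ts * vd (R (i+1) ts) * Z (i+1) ts ≤ 0 := by
      have hid : R i ts * vd (R i ts) * Z i ts - R (i+1) ts * vd (R (i+1) ts) * Z (i+1) ts
          = R (i+1) ts * vd (R (i+1) ts) * (Z i ts - Z (i+1) ts)
            + (R i ts * vd (R i ts) - R (i+1) ts * vd (R (i+1) ts)) * Z i ts := by ring
      rw [hid]
      have h1 : R (i+1) ts * vd (R (i+1) ts) * (Z i ts - Z (i+1) ts) ≤ 0 :=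
        mul_nonpos_of_nonpos_of_nonneg hp2 hZd
      have h2 : (R i ts * vd (R i ts) - R (i+1) ts * vd (R (i+1) ts)) * Z i ts ≤ 0 :=
        mul_nonpos_of_nonpos_of_nonneg (by linarith) hZi0.le
      linarith
    -- derivative of f i at ts
    set Dw := R i ts * vd (R i ts) * Z i ts - R (i+1) ts * vd (R (i+1) ts) * Z (i+1) ts with hDwdef
    have hfd : HasDerivWithinAt (f i) ((1+ε) * w i ts - (w i ts + ts * Dw)) (Ici 0) ts := by
      have h1 := (hyder i hilt ts htsIci).const_mul (1+ε)
      have h2 := (hasDerivWithinAt_id ts (Ici (0:ℝ))).mul (hwder i hilt ts htsIci)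
      have h3 := h1.sub h2
      have heq : (1+ε) * w i ts - (w i ts + ts * Dw)
          = (1+ε) * w i ts - (1 * w i ts + id ts *
            (R i ts * vd (R i ts) * Z i ts - R (i+1) ts * vd (R (i+1) ts) * Z (i+1) ts)) := by
        rw [hDwdef]; simp
      rw [heq]
      simp only [hfdef]
      exact h3
    have hG : (1+ε) * w i ts - (w i ts + ts * Dw) ≤ 0 := by
      have hfd' : HasDerivWithinAt (f i) ((1+ε) * w i ts - (w i ts + ts * Dw)) (Ico 0 ts) ts :=
        hfd.mono (fun s hs => hs.1)
      have hslope := hasDerivWithinAt_iff_tendsto_slope.1 hfd'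
      have hnmem : ts ∉ Ico (0:ℝ) ts := fun h => lt_irrefl ts h.2
      rw [Set.diff_singleton_eq_self hnmem] at hslope
      refine le_of_tendsto hslope (eventually_nhdsWithin_of_forall ?_)
      intro s hs
      have hgs : 0 < f i s := hnotS s hs i hilt
      have hsl : slope (f i) ts s = (s - ts)⁻¹ * (f i s - f i ts) := by
        simp [slope, smul_eq_mul]
      rw [hsl, hfeq, sub_zero]
      have hinv : (s - ts)⁻¹ ≤ 0 := inv_nonpos.2 (by linarith [hs.2])
      exact mul_nonpos_of_nonpos_of_nonneg hinv hgs.le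
    have hG' : 0 < (1+ε) * w i ts - (w i ts + ts * Dw) := by
      have hεw : 0 < ε * w i ts := mul_pos hε hwts
      have htD : ts * Dw ≤ 0 := mul_nonpos_of_nonneg_of_nonpos hts0.le hDw
      nlinarith
    linarith
  -- pass to the limit ε → 0
  have hle : ∀ δ > (0:ℝ), t0 * w i0 t0 ≤ y i0 t0 + δ := by
    intro δ hδ
    have hε : 0 < δ / y i0 t0 := div_pos hδ hy0
    have h := (key _ hε t0 ⟨ht0, le_refl t0⟩ i0 hi0).le
    have heq : (1 + δ / y i0 t0) * y i0 t0 = y i0 t0 + δ := by field_simp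
    rw [heq] at h
    exact h
  have hfinal : t0 * w i0 t0 ≤ y i0 t0 := le_of_forall_pos_le_add hle
  have hres : t0 * w i0 t0 / y i0 t0 ≤ 1 := (div_le_one hy0).2 hfinal
  simpa only [hydef, hwdef] using hres
end

section
/- (Wasserstein equi-continuity in time.) Assume (V1) and (I), and let ρⁿ be the discrete density of the follow-the-leader scheme with R_i(t) ∈ [0,R̄] for all i, t. Then for all s, t ≥ 0, W₁(ρⁿ(·,t), ρⁿ(·,s)) ≤ 2·max{v_max, |v(R̄)|}·|t − s|; in particular the constant is independent of n, s and t. -/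
open MeasureTheory Set Filter Topology

/-- The `1`-Wasserstein distance between two probability densities on `ℝ`, expressed
through the classical one-dimensional formula `W₁(f,g) = ‖F - G‖_{L¹(ℝ)}`, where `F, G`
are the cumulative distribution functions (this equals the `L¹(0,1)` distance of the
pseudo-inverses of the CDFs). -/
noncomputable def W1 (f g : ℝ → ℝ) : ℝ :=
  ∫ y : ℝ, |(∫ u in Set.Iic y, f u) - (∫ u in Set.Iic y, g u)|

/-- Atomisation of the initial datum `rb` into `n` particles of mass `1/n`. -/
def Atomised (rb : ℝ → ℝ) (n : ℕ) (x : ℕ → ℝ → ℝ) : Prop :=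
  x 0 0 = sInf (tsupport rb) ∧ x n 0 = sSup (tsupport rb) ∧
  ∀ i : ℕ, 1 ≤ i → i ≤ n - 1 →
    x i 0 = sSup {y : ℝ | (∫ s in (x (i - 1) 0)..y, rb s) < 1 / n}

/-- Clamp-type CDF of the uniform distribution on `[a,b]`. -/
noncomputable def gg (a b y : ℝ) : ℝ := max 0 (min 1 ((y - a) / (b - a)))

lemma gg_cont (a b : ℝ) : Continuous (gg a b) := by
  exact continuous_const.max (continuous_const.min ((continuous_id.sub continuous_const).div_const _))

lemma gg_nonneg (a b y : ℝ) : 0 ≤ gg a b y := le_max_left _ _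

lemma gg_le_one (a b y : ℝ) : gg a b y ≤ 1 := max_le zero_le_one (min_le_left _ _)

lemma gg_of_le (hab : a < b) (h : y ≤ a) : gg a b y = 0 := by
  have : (y - a) / (b - a) ≤ 0 :=
    div_nonpos_of_nonpos_of_nonneg (by linarith) (by linarith)
  exact max_eq_left ((min_le_right _ _).trans this)

lemma gg_of_ge (hab : a < b) (h : b ≤ y) : gg a b y = 1 := by
  have : (1:ℝ) ≤ (y - a) / (b - a) := (one_le_div (by linarith)).2 (by linarith)
  rw [gg, min_eq_left this, max_eq_right zero_le_one]

lemma gg_of_mem (hab : a < b) (h1 : a ≤ y) (h2 : y ≤ b) :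
    gg a b y = (y - a) / (b - a) := by
  rw [gg, min_eq_right ((div_le_one (by linarith)).2 (by linarith)),
    max_eq_right (div_nonneg (by linarith) (by linarith))]

lemma gg_anti {a1 b1 a2 b2 : ℝ} (ha : a1 ≤ a2) (hb : b1 ≤ b2)
    (h1 : a1 < b1) (h2 : a2 < b2) (y : ℝ) : gg a2 b2 y ≤ gg a1 b1 y := by
  rcases le_or_gt y a2 with h | h
  · rw [gg_of_le h2 h]; exact gg_nonneg _ _ _
  rcases le_or_gt b1 y with h' | h'
  · rw [gg_of_ge h1 h']; exact gg_le_one _ _ _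
  have hy1 : a1 ≤ y := ha.trans h.le
  have hy2 : y ≤ b2 := h'.le.trans hb
  rw [gg_of_mem h1 hy1 h'.le, gg_of_mem h2 h.le hy2,
    div_le_div_iff₀ (by linarith) (by linarith)]
  nlinarith [mul_nonneg (sub_nonneg.2 h'.le) (sub_nonneg.2 ha),
    mul_nonneg (sub_nonneg.2 h.le) (sub_nonneg.2 hb),
    mul_nonneg (sub_nonneg.2 ha) (sub_nonneg.2 hb)]

lemma gg_intervalIntegral (hab : a < b) (hc : c ≤ a) (hd : b ≤ d) :
    ∫ y in c..d, gg a b y = (b - a) / 2 + (d - b) := by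
  have hi : ∀ p q : ℝ, IntervalIntegrable (gg a b) volume p q :=
    fun p q => (gg_cont a b).intervalIntegrable p q
  rw [← intervalIntegral.integral_add_adjacent_intervals (b := a) (hi c a) (hi a d),
      ← intervalIntegral.integral_add_adjacent_intervals (b := b) (hi a b) (hi b d)]
  have h1 : ∫ y in c..a, gg a b y = 0 := by
    rw [intervalIntegral.integral_congr (g := fun _ => (0:ℝ))
      (fun y hy => by rw [uIcc_of_le hc] at hy; exact gg_of_le hab hy.2)]
    simp
  have h3 : ∫ y in b..d, gg a b y = d - b := by
    rw [intervalIntegral.integral_congr (g := fun _ => (1:ℝ))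
      (fun y hy => by rw [uIcc_of_le hd] at hy; exact gg_of_ge hab hy.1)]
    simp
  have h2 : ∫ y in a..b, gg a b y = (b - a) / 2 := by
    rw [intervalIntegral.integral_congr (g := fun y => (y - a) / (b - a))
      (fun y hy => by rw [uIcc_of_le hab.le] at hy; exact gg_of_mem hab hy.1 hy.2)]
    rw [intervalIntegral.integral_div]
    have : (∫ y in a..b, (y - a)) = (b ^ 2 - a ^ 2) / 2 - (b - a) * a := by
      rw [intervalIntegral.integral_sub intervalIntegral.intervalIntegrable_id
        (intervalIntegrable_const), integral_id,
        intervalIntegral.integral_const, smul_eq_mul]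
    rw [this, div_eq_iff (sub_ne_zero.2 hab.ne')]
    ring
  linarith

lemma integral_gg_sub {a1 b1 a2 b2 : ℝ} (h1 : a1 < b1) (h2 : a2 < b2)
    (ha : a1 ≤ a2) (hb : b1 ≤ b2) :
    ∫ y : ℝ, (gg a1 b1 y - gg a2 b2 y) = (a2 - a1) / 2 + (b2 - b1) / 2 := by
  have hvan : ∀ y : ℝ, y ∉ Icc a1 b2 → gg a1 b1 y - gg a2 b2 y = 0 := by
    intro y hy
    rcases not_and_or.1 (mem_Icc.not.1 hy) with h | h
    · push_neg at h
      rw [gg_of_le h1 h.le, gg_of_le h2 (h.le.trans ha)]; ring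
    · push_neg at h
      rw [gg_of_ge h1 (hb.trans h.le), gg_of_ge h2 h.le]; ring
  have hle : a1 ≤ b2 := (ha.trans h2.le)
  rw [← setIntegral_eq_integral_of_forall_compl_eq_zero hvan,
    integral_Icc_eq_integral_Ioc, ← intervalIntegral.integral_of_le hle,
    intervalIntegral.integral_sub ((gg_cont a1 b1).intervalIntegrable _ _)
      ((gg_cont a2 b2).intervalIntegrable _ _),
    gg_intervalIntegral h1 le_rfl hb, gg_intervalIntegral h2 ha le_rfl]
  ring

lemma gg_hcs {a b a' b' : ℝ} (h1 : a < b) (h2 : a' < b') :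
    HasCompactSupport (fun y => gg a b y - gg a' b' y) := by
  apply HasCompactSupport.intro (isCompact_Icc (a := min a a') (b := max b b'))
  intro y hy
  rcases not_and_or.1 (mem_Icc.not.1 hy) with h | h
  · push_neg at h
    rw [gg_of_le h1 (le_of_lt (lt_of_lt_of_le h (min_le_left _ _))),
      gg_of_le h2 (le_of_lt (lt_of_lt_of_le h (min_le_right _ _)))]; ring
  · push_neg at h
    rw [gg_of_ge h1 ((le_max_left _ _).trans h.le),
      gg_of_ge h2 ((le_max_right _ _).trans h.le)]; ring

lemma gg_sub_integrable {a b a' b' : ℝ} (h1 : a < b) (h2 : a' < b') :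
    Integrable (fun y => gg a b y - gg a' b' y) volume :=
  ((gg_cont a b).sub (gg_cont a' b')).integrable_of_hasCompactSupport (gg_hcs h1 h2)

lemma gg_L1 {a b a' b' : ℝ} (h1 : a < b) (h2 : a' < b') :
    ∫ y : ℝ, |gg a b y - gg a' b' y| ≤ |a - a'| + |b - b'| := by
  set A := min a a' with hA
  set A2 := max a a' with hA2
  set B := min b b' with hB
  set B2 := max b b' with hB2
  have hAB : A < B := lt_min ((min_le_left a a').trans_lt h1) ((min_le_right a a').trans_lt h2)
  have hA2B2 : A2 < B2 := max_lt_max h1 h2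
  have hpt : ∀ y, |gg a b y - gg a' b' y| ≤ gg A B y - gg A2 B2 y := by
    intro y
    have u1 := gg_anti (min_le_left a a') (min_le_left b b') hAB h1 y
    have u2 := gg_anti (min_le_right a a') (min_le_right b b') hAB h2 y
    have u3 := gg_anti (le_max_left a a') (le_max_left b b') h1 hA2B2 y
    have u4 := gg_anti (le_max_right a a') (le_max_right b b') h2 hA2B2 y
    rw [abs_sub_le_iff]
    constructor <;> linarith
  calc ∫ y : ℝ, |gg a b y - gg a' b' y|
      ≤ ∫ y : ℝ, (gg A B y - gg A2 B2 y) :=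
        integral_mono (gg_sub_integrable h1 h2).abs (gg_sub_integrable hAB hA2B2) hpt
    _ = (A2 - A) / 2 + (B2 - B) / 2 := integral_gg_sub hAB hA2B2 min_le_max min_le_max
    _ ≤ |a - a'| + |b - b'| := by
        have e1 : A2 - A = |a' - a| := max_sub_min_eq_abs a a'
        have e2 : B2 - B = |b' - b| := max_sub_min_eq_abs b b'
        rw [e1, e2, abs_sub_comm a' a, abs_sub_comm b' b]
        have := abs_nonneg (a - a'); have := abs_nonneg (b - b')
        linarith

lemma vol_inter (a b y : ℝ) :
    volume (Iic y ∩ Ico a b) = ENNReal.ofReal (min y b - a) := by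
  rcases lt_or_ge y b with h | h
  · have : Iic y ∩ Ico a b = Icc a y := by
      ext u
      simp only [mem_inter_iff, mem_Iic, mem_Ico, mem_Icc]
      constructor
      · rintro ⟨u1, u2, u3⟩; exact ⟨u2, u1⟩
      · rintro ⟨u1, u2⟩; exact ⟨u2, u1, lt_of_le_of_lt u2 h⟩
    rw [this, Real.volume_Icc, min_eq_left h.le]
  · have : Iic y ∩ Ico a b = Ico a b :=
      inter_eq_right.2 (fun u hu => (le_of_lt hu.2).trans h)
    rw [this, Real.volume_Ico, min_eq_right h]

lemma cdf_block {a b : ℝ} (hab : a < b) (c : ℝ) (y : ℝ) :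
    ∫ u in Iic y, (Ico a b).indicator (fun _ => c / (b - a)) u = c * gg a b y := by
  rw [setIntegral_indicator measurableSet_Ico, setIntegral_const, measureReal_def, vol_inter,
    ENNReal.toReal_ofReal', smul_eq_mul]
  have hba : (0:ℝ) < b - a := by linarith
  rcases le_total y a with h | h
  · rw [max_eq_right (by simp only [sub_nonpos]; exact (min_le_left _ _).trans h),
      gg_of_le hab h]
    ring
  · rcases le_total y b with h2 | h2
    · rw [min_eq_left h2, gg_of_mem hab h h2, max_eq_left (by linarith)]
      field_simp
    · rw [min_eq_right h2, gg_of_ge hab h2, max_eq_left (by linarith)]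
      field_simp

lemma indicator_block_integrable (a b c : ℝ) :
    Integrable ((Ico a b).indicator (fun _ => c)) volume := by
  rw [integrable_indicator_iff measurableSet_Ico]
  exact integrableOn_const (by rw [Real.volume_Ico]; exact ENNReal.ofReal_ne_top)

lemma cdf_eq (n : ℕ) (x : ℕ → ℝ → ℝ) (t : ℝ)
    (hord : ∀ i < n, x i t < x (i + 1) t) (y : ℝ) :
    ∫ u in Iic y, discDens n x u t
      = ∑ i ∈ Finset.range n, (1 / (n:ℝ)) * gg (x i t) (x (i + 1) t) y := by
  unfold discDens
  rw [integral_finset_sum _ (fun i _ =>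
    (indicator_block_integrable (x i t) (x (i+1) t) (Rden n x i t)).integrableOn)]
  refine Finset.sum_congr rfl fun i hi => ?_
  exact cdf_block (hord i (Finset.mem_range.1 hi)) (1 / (n:ℝ)) y


/-- **Wasserstein equi-continuity in time** (Proposition 5.1 of the paper).
Under (V1) and (I), the discrete densities satisfy
`W₁(ρⁿ(·,t), ρⁿ(·,s)) ≤ 2 max{v_max, |v(R̄)|} |t - s|`, with a constant independent of
`n`, `s` and `t`. -/
theorem wasserstein_equicontinuity
    (rb : ℝ → ℝ) (Rb : ℝ)
    -- (I)
    (hInt : MeasureTheory.Integrable rb)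
    (hnn : ∀ y, 0 ≤ rb y)
    (hsupp : HasCompactSupport rb)
    (hmass : (∫ y : ℝ, rb y) = 1)
    (hmem : MeasureTheory.MemLp rb ⊤)
    (hRb : Rb = (MeasureTheory.eLpNorm rb ⊤ MeasureTheory.volume).toReal)
    -- (V1)
    (v vd : ℝ → ℝ)
    (hv1 : ∀ r ∈ Set.Icc (0:ℝ) Rb, HasDerivWithinAt v (vd r) (Set.Icc 0 Rb) r)
    (hv1c : ContinuousOn vd (Set.Icc 0 Rb))
    (hanti : StrictAntiOn v (Set.Icc 0 Rb))
    -- follow-the-leader scheme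
    (n : ℕ) (hn : 0 < n) (x : ℕ → ℝ → ℝ)
    (hatom : Atomised rb n x)
    (horder : ∀ t ∈ Set.Ici (0:ℝ), ∀ i < n, x i t < x (i + 1) t)
    (hrange : ∀ i < n, ∀ t ∈ Set.Ici (0:ℝ), Rden n x i t ∈ Set.Icc 0 Rb)
    (hode : ∀ i < n, ∀ t ∈ Set.Ici (0:ℝ),
      HasDerivWithinAt (x i) (v (Rden n x i t)) (Set.Ici 0) t)
    (hoden : ∀ t ∈ Set.Ici (0:ℝ), HasDerivWithinAt (x n) (v 0) (Set.Ici 0) t) :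
    ∀ s ∈ Set.Ici (0:ℝ), ∀ t ∈ Set.Ici (0:ℝ),
      W1 (fun y => discDens n x y t) (fun y => discDens n x y s) ≤
        2 * max (v 0) |v Rb| * |t - s| := by
  intro s hs t ht
  have hn' : (n:ℝ) ≠ 0 := Nat.cast_ne_zero.2 hn.ne'
  set L := max (v 0) |v Rb| with hLdef
  have hL0 : (0:ℝ) ≤ L := (abs_nonneg _).trans (le_max_right _ _)
  have hRb0 : 0 ≤ Rb := hRb ▸ ENNReal.toReal_nonneg
  have hvb : ∀ r ∈ Set.Icc (0:ℝ) Rb, |v r| ≤ L := by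
    intro r hr
    have h1 : v r ≤ v 0 := hanti.antitoneOn (Set.left_mem_Icc.2 hRb0) hr hr.1
    have h2 : v Rb ≤ v r := hanti.antitoneOn hr (Set.right_mem_Icc.2 hRb0) hr.2
    refine abs_le.2 ⟨?_, h1.trans (le_max_left _ _)⟩
    have h3 := neg_abs_le (v Rb)
    have h4 := le_max_right (v 0) |v Rb|
    linarith
  have hlip : ∀ i ≤ n, |x i t - x i s| ≤ L * |t - s| := by
    intro i hi
    rcases lt_or_eq_of_le hi with hi' | rfl
    · have := (convex_Ici (0:ℝ)).norm_image_sub_le_of_norm_hasDerivWithin_le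
        (f' := fun τ => v (Rden n x i τ)) (fun τ hτ => hode i hi' τ hτ)
        (fun τ hτ => (Real.norm_eq_abs _).le.trans (hvb _ (hrange i hi' τ hτ))) hs ht
      simpa [Real.norm_eq_abs] using this
    · have := (convex_Ici (0:ℝ)).norm_image_sub_le_of_norm_hasDerivWithin_le
        (f' := fun _ => v 0) (fun τ hτ => hoden τ hτ)
        (fun τ hτ => (Real.norm_eq_abs _).le.trans (hvb 0 (Set.left_mem_Icc.2 hRb0))) hs ht
      simpa [Real.norm_eq_abs] using this
  have hordt := horder t ht
  have hords := horder s hs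
  show (∫ y : ℝ, |(∫ u in Set.Iic y, discDens n x u t)
      - (∫ u in Set.Iic y, discDens n x u s)|) ≤ 2 * L * |t - s|
  have hfun : (fun y : ℝ => |(∫ u in Set.Iic y, discDens n x u t)
        - (∫ u in Set.Iic y, discDens n x u s)|)
      = fun y : ℝ => |∑ i ∈ Finset.range n,
          (1 / (n:ℝ)) * (gg (x i t) (x (i+1) t) y - gg (x i s) (x (i+1) s) y)| := by
    funext y
    rw [cdf_eq n x t hordt y, cdf_eq n x s hords y, ← Finset.sum_sub_distrib]
    congr 1
    exact Finset.sum_congr rfl fun i _ => by ring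
  rw [hfun]
  have hDint : ∀ i ∈ Finset.range n, Integrable
      (fun y => (1/(n:ℝ)) * (gg (x i t) (x (i+1) t) y - gg (x i s) (x (i+1) s) y)) volume := by
    intro i hi
    exact (gg_sub_integrable (hordt i (Finset.mem_range.1 hi))
      (hords i (Finset.mem_range.1 hi))).const_mul _
  have hDabs : ∀ i ∈ Finset.range n, Integrable
      (fun y => (1/(n:ℝ)) * |gg (x i t) (x (i+1) t) y - gg (x i s) (x (i+1) s) y|) volume := by
    intro i hi
    exact ((gg_sub_integrable (hordt i (Finset.mem_range.1 hi))
      (hords i (Finset.mem_range.1 hi))).abs).const_mul _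
  calc (∫ y : ℝ, |∑ i ∈ Finset.range n,
          (1 / (n:ℝ)) * (gg (x i t) (x (i+1) t) y - gg (x i s) (x (i+1) s) y)|)
      ≤ ∫ y : ℝ, ∑ i ∈ Finset.range n,
          (1 / (n:ℝ)) * |gg (x i t) (x (i+1) t) y - gg (x i s) (x (i+1) s) y| := by
        refine integral_mono (integrable_finset_sum _ hDint).abs
          (integrable_finset_sum _ hDabs) (fun y => ?_)
        refine (Finset.abs_sum_le_sum_abs _ _).trans ?_
        refine Finset.sum_le_sum fun i _ => ?_
        rw [abs_mul, abs_of_nonneg (by positivity : (0:ℝ) ≤ 1/(n:ℝ))]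
    _ = ∑ i ∈ Finset.range n, (1/(n:ℝ)) *
          ∫ y : ℝ, |gg (x i t) (x (i+1) t) y - gg (x i s) (x (i+1) s) y| := by
        rw [integral_finset_sum _ hDabs]
        exact Finset.sum_congr rfl fun i _ => integral_const_mul _ _
    _ ≤ ∑ _i ∈ Finset.range n, (1/(n:ℝ)) * (2 * L * |t - s|) := by
        refine Finset.sum_le_sum fun i hi => ?_
        have hi' := Finset.mem_range.1 hi
        refine mul_le_mul_of_nonneg_left ?_ (by positivity)
        refine (gg_L1 (hordt i hi') (hords i hi')).trans ?_
        have g1 := hlip i hi'.le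
        have g2 := hlip (i+1) hi'
        linarith
    _ = 2 * L * |t - s| := by
        rw [Finset.sum_const, Finset.card_range, nsmul_eq_mul]
        field_simp
end

section
/- (Sufficient condition for (V2).) Let R̄ > 0 and let v ∈ C²([0,R̄]) be strictly decreasing with v'(ρ) < 0 on [0,R̄]. Set φ(ρ) := ρ·v'(ρ) and assume φ is non-increasing on [0,R̄] and that there exists K̃ ≥ 0 with |ρ·v''(ρ)/v'(ρ)| ≤ K̃ for all ρ ∈ [0,R̄]. Then 0 ≤ (φ(ρ)−φ(σ))/(v(ρ)−v(σ)) ≤ 1 + K̃ for all ρ, σ ∈ [0,R̄] with ρ ≠ σ; that is, assumption (V2) holds with K = 1 + K̃. -/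
open MeasureTheory Set Filter Topology

/-- **Sufficient condition for (V2)** (Remark 2.3 of the paper).  If `v ∈ C²([0,R̄])` is
strictly decreasing with `v' < 0`, `φ(r) = r v'(r)` is non-increasing, and
`|r v''(r) / v'(r)| ≤ K̃` on `[0,R̄]`, then assumption (V2) holds with `K = 1 + K̃`:
`0 ≤ (φ(ρ)-φ(σ))/(v(ρ)-v(σ)) ≤ 1 + K̃` for all distinct `ρ, σ ∈ [0,R̄]`. -/
theorem sufficient_condition_for_V2
    (Rb : ℝ) (hRb : 0 < Rb) (v vd vdd : ℝ → ℝ)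
    -- v ∈ C²([0,R̄]) with first derivative vd and second derivative vdd
    (hv1 : ∀ r ∈ Set.Icc (0:ℝ) Rb, HasDerivWithinAt v (vd r) (Set.Icc 0 Rb) r)
    (hv2 : ∀ r ∈ Set.Icc (0:ℝ) Rb, HasDerivWithinAt vd (vdd r) (Set.Icc 0 Rb) r)
    (hvddc : ContinuousOn vdd (Set.Icc 0 Rb))
    -- v strictly decreasing with v' < 0
    (hanti : StrictAntiOn v (Set.Icc 0 Rb))
    (hneg : ∀ r ∈ Set.Icc (0:ℝ) Rb, vd r < 0)
    -- φ(r) = r v'(r) non-increasing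
    (hphi : AntitoneOn (fun r => r * vd r) (Set.Icc 0 Rb))
    -- |r v''(r)/v'(r)| ≤ K̃
    (Kt : ℝ) (hKt : 0 ≤ Kt)
    (hbound : ∀ r ∈ Set.Icc (0:ℝ) Rb, |r * vdd r / vd r| ≤ Kt) :
    ∀ r ∈ Set.Icc (0:ℝ) Rb, ∀ s ∈ Set.Icc (0:ℝ) Rb, r ≠ s →
      0 ≤ (r * vd r - s * vd s) / (v r - v s) ∧
      (r * vd r - s * vd s) / (v r - v s) ≤ 1 + Kt := by
  -- The auxiliary function g(r) = (1+Kt) v(r) - r vd(r) is antitone on [0,Rb].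
  have hint : interior (Set.Icc (0:ℝ) Rb) = Set.Ioo 0 Rb := interior_Icc
  have hg : AntitoneOn (fun r => (1 + Kt) * v r - r * vd r) (Set.Icc 0 Rb) := by
    apply antitoneOn_of_hasDerivWithinAt_nonpos (f' := fun x => (1 + Kt) * vd x - (vd x + x * vdd x))
      (convex_Icc 0 Rb)
    · exact ContinuousOn.sub
        (continuousOn_const.mul (fun x hx => (hv1 x hx).continuousWithinAt))
        (continuousOn_id.mul (fun x hx => (hv2 x hx).continuousWithinAt))
    · intro x hx
      rw [hint] at hx ⊢
      have hx' : x ∈ Set.Icc (0:ℝ) Rb := Set.Ioo_subset_Icc_self hx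
      have h1 := ((hv1 x hx').const_mul (1 + Kt)).sub
        (((hasDerivWithinAt_id x _).mul (hv2 x hx')))
      simp only [one_mul, id] at h1
      exact h1.mono Set.Ioo_subset_Icc_self
    · intro x hx
      rw [hint] at hx
      have hx' : x ∈ Set.Icc (0:ℝ) Rb := Set.Ioo_subset_Icc_self hx
      have hvdx := hneg x hx'
      have hb := hbound x hx'
      have habs : |x * vdd x| ≤ Kt * (-vd x) := by
        have : |x * vdd x / vd x| = |x * vdd x| / |vd x| := abs_div _ _
        rw [this, div_le_iff₀ (abs_pos.mpr hvdx.ne)] at hb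
        rw [abs_of_neg hvdx] at hb
        linarith
      have h2 : Kt * vd x ≤ x * vdd x := by
        have := neg_abs_le (x * vdd x)
        nlinarith
      nlinarith
  -- Main claim for r < s.
  have key : ∀ r ∈ Set.Icc (0:ℝ) Rb, ∀ s ∈ Set.Icc (0:ℝ) Rb, r < s →
      0 ≤ (r * vd r - s * vd s) / (v r - v s) ∧
      (r * vd r - s * vd s) / (v r - v s) ≤ 1 + Kt := by
    intro r hr s hs hrs
    have hD : 0 < v r - v s := sub_pos.mpr (hanti hr hs hrs)
    have hN : 0 ≤ r * vd r - s * vd s := sub_nonneg.mpr (hphi hr hs hrs.le)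
    have hgrs : (1 + Kt) * v s - s * vd s ≤ (1 + Kt) * v r - r * vd r := hg hr hs hrs.le
    constructor
    · exact div_nonneg hN hD.le
    · rw [div_le_iff₀ hD]; nlinarith
  intro r hr s hs hne
  rcases hne.lt_or_gt with h | h
  · exact key r hr s hs h
  · have := key s hs r hr h
    have heq : (r * vd r - s * vd s) / (v r - v s)
        = (s * vd s - r * vd r) / (v s - v r) := by
      rw [← neg_div_neg_eq]; ring_nf
    rw [heq]; exact this
end

section
/- (Gagliardo–Nirenberg type interpolation for BV functions.) There exists a universal constant C ≥ 0 such that for every g ∈ BV(ℝ) ∩ L¹(ℝ), setting G(x) := ∫_{−∞}^{x} g(y) dy, one has ‖g‖_{L¹(ℝ)} ≤ C·TV[g]^{1/2}·‖G‖_{L¹(ℝ)}^{1/2}. -/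
open MeasureTheory Set Filter Topology

-- Lemma A: local interval estimate
lemma gnbv_lemA {g : ℝ → ℝ} (hg : Integrable g) (hV : eVariationOn g Set.univ ≠ ⊤)
    {a b : ℝ} (hab : a ≤ b) :
    (∫ x in Icc a b, |g x|) ≤
      |(∫ y in Iic b, g y) - (∫ y in Iic a, g y)| +
        (b - a) * (eVariationOn g (Icc a b)).toReal := by
  rcases eq_or_lt_of_le hab with rfl | hlt
  · have h0 : volume.restrict (Icc a a) = 0 := by
      simp [Measure.restrict_eq_zero]
    rw [h0, integral_zero_measure]
    simp [sub_self]
  · set V : ℝ := (eVariationOn g (Icc a b)).toReal with hVdef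
    have hVne : eVariationOn g (Icc a b) ≠ ⊤ :=
      ne_top_of_le_ne_top hV (eVariationOn.mono g (subset_univ _))
    have hV0 : 0 ≤ V := ENNReal.toReal_nonneg
    have hba : (0:ℝ) < b - a := by linarith
    set D : ℝ := ∫ y in Ioc a b, g y with hD
    -- pointwise bound
    have key : ∀ x ∈ Icc a b, |g x| ≤ (|D| + (b - a) * V) / (b - a) := by
      intro x hx
      rw [le_div_iff₀ hba]
      have h1 : (b - a) * g x - D = ∫ y in Ioc a b, (g x - g y) := by
        rw [integral_sub (integrable_const _) (hg.integrableOn)]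
        rw [setIntegral_const]
        simp [Real.volume_Ioc, ENNReal.toReal_ofReal hba.le, smul_eq_mul]
        rw [max_eq_left hba.le]
      have h2 : ‖∫ y in Ioc a b, (g x - g y)‖ ≤ (b - a) * V := by
        have := norm_setIntegral_le_of_norm_le_const (C := V)
          (f := fun y => g x - g y) (μ := volume) (s := Ioc a b) (by simp [Real.volume_Ioc])
          (fun y hy => ?_)
        · calc ‖∫ y in Ioc a b, (g x - g y)‖ ≤ V * (volume (Ioc a b)).toReal := this
            _ = (b - a) * V := by
              simp [Real.volume_Ioc, ENNReal.toReal_ofReal hba.le]; ring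
        · have hy' : y ∈ Icc a b := Ioc_subset_Icc_self hy
          have := eVariationOn.edist_le g hx hy'
          have hd : dist (g x) (g y) ≤ V := by
            rw [dist_edist]
            exact ENNReal.toReal_mono hVne this
          simpa [Real.dist_eq] using hd
      have h3 : |(b - a) * g x - D| ≤ (b - a) * V := by rw [h1]; simpa using h2
      have h4 : |(b - a) * g x| ≤ |D| + (b - a) * V := by
        have h5 : |(b - a) * g x| ≤ |D| + |(b - a) * g x - D| := by
          have := abs_add_le D ((b - a) * g x - D)
          simpa using this
        linarith
      calc |g x| * (b - a) = |(b - a) * g x| := by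
            rw [abs_mul, abs_of_pos hba]; ring
        _ ≤ |D| + (b - a) * V := h4
    have hint : ∫ x in Icc a b, |g x| ≤ ∫ _x in Icc a b, ((|D| + (b - a) * V) / (b - a)) := by
      apply setIntegral_mono_on hg.abs.integrableOn (integrableOn_const (by simp [Real.volume_Icc])) measurableSet_Icc
      exact key
    have hconst : ∫ _x in Icc a b, ((|D| + (b - a) * V) / (b - a)) = |D| + (b - a) * V := by
      rw [setIntegral_const]
      simp only [smul_eq_mul, Real.volume_real_Icc_of_le hab, Real.volume_Icc, ENNReal.toReal_ofReal hba.le]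
      field_simp
    have hDG : D = (∫ y in Iic b, g y) - (∫ y in Iic a, g y) := by
      rw [intervalIntegral.integral_Iic_sub_Iic hg.integrableOn hg.integrableOn,
        intervalIntegral.integral_of_le hab]
    rw [hDG] at hint hconst
    linarith [hint, hconst.le, hconst.ge]

-- Lemma C: sum of variations over consecutive intervals
lemma gnbv_lemC (g : ℝ → ℝ) (b : ℕ → ℝ) (hb : ∀ k, b k ≤ b (k + 1)) (n : ℕ) :
    ∑ k ∈ Finset.range n, eVariationOn g (Icc (b k) (b (k + 1))) ≤
      eVariationOn g (Icc (b 0) (b n)) := by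
  have hmono : Monotone b := monotone_nat_of_le_succ hb
  induction n with
  | zero => simp
  | succ n ih =>
    rw [Finset.sum_range_succ]
    have h1 : eVariationOn g (Icc (b 0) (b n)) + eVariationOn g (Icc (b n) (b (n + 1))) =
        eVariationOn g (Icc (b 0) (b (n + 1))) := by
      have := eVariationOn.Icc_add_Icc g (s := (univ : Set ℝ))
        (hmono (Nat.zero_le n)) (hb n) (mem_univ _)
      simpa [Set.univ_inter] using this
    calc ∑ k ∈ Finset.range n, eVariationOn g (Icc (b k) (b (k + 1))) +
          eVariationOn g (Icc (b n) (b (n + 1)))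
        ≤ eVariationOn g (Icc (b 0) (b n)) + eVariationOn g (Icc (b n) (b (n + 1))) :=
          add_le_add_left ih _
      _ = eVariationOn g (Icc (b 0) (b (n + 1))) := h1

-- Lemma E': sum of integrals over consecutive Ioc blocks
lemma gnbv_lemE' {f : ℝ → ℝ} (hf : Integrable f)
    (b : ℕ → ℝ) (hb : ∀ k, b k ≤ b (k + 1)) (n : ℕ) :
    ∑ k ∈ Finset.range n, (∫ x in Ioc (b k) (b (k + 1)), f x) =
      ∫ x in Ioc (b 0) (b n), f x := by
  have hmono : Monotone b := monotone_nat_of_le_succ hb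
  induction n with
  | zero => simp
  | succ n ih =>
    rw [Finset.sum_range_succ, ih]
    rw [← setIntegral_union (Set.Ioc_disjoint_Ioc_of_le le_rfl) measurableSet_Ioc
      hf.integrableOn hf.integrableOn,
      Set.Ioc_union_Ioc_eq_Ioc (hmono (Nat.zero_le n)) (hb n)]

-- Lemma E: sum of integrals over consecutive Icc blocks of a nonneg function
lemma gnbv_lemE {f : ℝ → ℝ} (hf : Integrable f) (hpos : ∀ x, 0 ≤ f x)
    (b : ℕ → ℝ) (hb : ∀ k, b k ≤ b (k + 1)) (n : ℕ) :
    ∑ k ∈ Finset.range n, (∫ x in Icc (b k) (b (k + 1)), f x) ≤ ∫ x, f x := by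
  have h1 : ∀ k : ℕ, (∫ x in Icc (b k) (b (k + 1)), f x) = ∫ x in Ioc (b k) (b (k + 1)), f x :=
    fun k => integral_Icc_eq_integral_Ioc
  simp_rw [h1]
  rw [gnbv_lemE' hf b hb n]
  exact setIntegral_le_integral hf (Eventually.of_forall hpos)

-- Lemma B : integral over [b 0, b n] of |g|
lemma gnbv_lemB {g : ℝ → ℝ} (hg : Integrable g) (hV : eVariationOn g Set.univ ≠ ⊤)
    (b : ℕ → ℝ) (hb : ∀ k, b k ≤ b (k + 1)) (n : ℕ) :
    (∫ x in Icc (b 0) (b n), |g x|) ≤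
      ∑ k ∈ Finset.range n,
        (|(∫ y in Iic (b (k + 1)), g y) - (∫ y in Iic (b k), g y)| +
          (b (k + 1) - b k) * (eVariationOn g (Icc (b k) (b (k + 1)))).toReal) := by
  have hmono : Monotone b := monotone_nat_of_le_succ hb
  induction n with
  | zero =>
    have h0 : volume.restrict (Icc (b 0) (b 0)) = 0 := by
      simp [Measure.restrict_eq_zero]
    rw [h0, integral_zero_measure]; simp
  | succ n ih =>
    rw [Finset.sum_range_succ]
    have hsplit : (∫ x in Icc (b 0) (b (n + 1)), |g x|) =
        (∫ x in Icc (b 0) (b n), |g x|) + ∫ x in Ioc (b n) (b (n + 1)), |g x| := by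
      rw [← setIntegral_union ((Set.Iic_disjoint_Ioc le_rfl).mono Set.Icc_subset_Iic_self le_rfl) measurableSet_Ioc
        hg.abs.integrableOn hg.abs.integrableOn,
        Set.Icc_union_Ioc_eq_Icc (hmono (Nat.zero_le n)) (hb n)]
    rw [hsplit]
    have h2 : (∫ x in Ioc (b n) (b (n + 1)), |g x|) ≤
        |(∫ y in Iic (b (n + 1)), g y) - (∫ y in Iic (b n), g y)| +
          (b (n + 1) - b n) * (eVariationOn g (Icc (b n) (b (n + 1)))).toReal := by
      rw [← integral_Icc_eq_integral_Ioc]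
      exact gnbv_lemA hg hV (hb n)
    linarith

-- continuity of the primitive
lemma gnbv_cont {g : ℝ → ℝ} (hg : Integrable g) :
    Continuous (fun x : ℝ => ∫ y in Iic x, g y) := by
  have h : ∀ x : ℝ, (∫ y in Iic x, g y) = (∫ y in Iic 0, g y) + ∫ y in (0:ℝ)..x, g y := by
    intro x
    rw [← intervalIntegral.integral_Iic_sub_Iic hg.integrableOn hg.integrableOn]
    ring
  have h2 : (fun x : ℝ => ∫ y in Iic x, g y) =
      fun x : ℝ => (∫ y in Iic 0, g y) + ∫ y in (0:ℝ)..x, g y := funext h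
  rw [h2]
  exact continuous_const.add (hg.continuous_primitive 0)

-- choice of a good point in an interval
lemma gnbv_choice {F : ℝ → ℝ} (hF : Continuous F) {c d : ℝ} (hcd : c ≤ d) :
    ∃ a ∈ Icc c d, |F a| * (d - c) ≤ ∫ x in Icc c d, |F x| := by
  obtain ⟨a, ha, hmin⟩ := isCompact_Icc.exists_isMinOn (nonempty_Icc.2 hcd)
    (hF.abs.continuousOn)
  refine ⟨a, ha, ?_⟩
  have h1 : (∫ _x in Icc c d, |F a|) ≤ ∫ x in Icc c d, |F x| := by
    apply setIntegral_mono_on (integrableOn_const (by simp [Real.volume_Icc]))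
      (hF.abs.integrableOn_Icc) measurableSet_Icc
    exact fun x hx => isMinOn_iff.1 hmin x hx
  calc |F a| * (d - c) = ∫ _x in Icc c d, |F a| := by
        rw [setIntegral_const]
        simp [Real.volume_Icc, ENNReal.toReal_ofReal (by linarith : (0:ℝ) ≤ d - c)]
        rw [max_eq_left (by linarith : (0:ℝ) ≤ d - c)]
        ring
    _ ≤ _ := h1

-- main estimate for a fixed mesh size h
lemma gnbv_lemD {g : ℝ → ℝ} (hg : Integrable g) (hV : eVariationOn g Set.univ ≠ ⊤)
    (hG : Integrable (fun x : ℝ => ∫ y in Iic x, g y)) {h : ℝ} (hh : 0 < h) :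
    (∫ x : ℝ, |g x|) ≤
      2 * (∫ x : ℝ, |∫ y in Iic x, g y|) / h + 2 * h * (eVariationOn g Set.univ).toReal := by
  set G : ℝ → ℝ := fun x => ∫ y in Iic x, g y with hGdef
  set A : ℝ := ∫ x : ℝ, |G x| with hAdef
  set V : ℝ := (eVariationOn g Set.univ).toReal with hVdef
  have hA0 : 0 ≤ A := integral_nonneg fun x => abs_nonneg _
  have hV0 : 0 ≤ V := ENNReal.toReal_nonneg
  have hGc : Continuous G := gnbv_cont hg
  have hGabs : Integrable (fun x => |G x|) := hG.abs
  -- choose grid points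
  have hex : ∀ n : ℤ, ∃ x ∈ Icc ((n:ℝ)*h) (((n:ℝ)+1)*h),
      |G x| * h ≤ ∫ t in Icc ((n:ℝ)*h) (((n:ℝ)+1)*h), |G t| := by
    intro n
    have hle : (n:ℝ)*h ≤ ((n:ℝ)+1)*h := by nlinarith
    obtain ⟨x, hx, hle2⟩ := gnbv_choice hGc hle
    exact ⟨x, hx, by simpa [show ((n:ℝ)+1)*h - (n:ℝ)*h = h by ring] using hle2⟩
  choose a ha hGa using hex
  have amono : ∀ m : ℤ, a m ≤ a (m + 1) := by
    intro m
    have h1 : a m ≤ ((m:ℝ)+1)*h := (ha m).2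
    have h2 : ((m+1 : ℤ):ℝ)*h ≤ a (m+1) := (ha (m+1)).1
    push_cast at h2
    linarith
  have astep : ∀ m : ℤ, a (m + 1) - a m ≤ 2 * h := by
    intro m
    have h1 : ((m:ℝ))*h ≤ a m := (ha m).1
    have h2 : a (m+1) ≤ (((m+1 : ℤ):ℝ)+1)*h := (ha (m+1)).2
    push_cast at h2
    linarith
  -- the estimate on a large interval
  have main : ∀ N : ℕ, (∫ x in Icc ((1-(N:ℝ))*h) ((N:ℝ)*h), |g x|) ≤ 2*A/h + 2*h*V := by
    intro N
    set b : ℕ → ℝ := fun k => a ((k:ℤ) - N) with hbdef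
    have hb : ∀ k, b k ≤ b (k + 1) := by
      intro k
      have := amono ((k:ℤ) - N)
      simpa [hbdef, show ((k:ℤ)+1) - N = ((k:ℤ) - N) + 1 by ring] using this
    have hbstep : ∀ k : ℕ, b (k+1) - b k ≤ 2*h := by
      intro k
      have := astep ((k:ℤ) - N)
      simpa [hbdef, show ((k:ℤ)+1) - N = ((k:ℤ) - N) + 1 by ring] using this
    -- variation sum bound
    have hVsum : ∑ k ∈ Finset.range (2*N),
        (eVariationOn g (Icc (b k) (b (k+1)))).toReal ≤ V := by
      have h1 := gnbv_lemC g b hb (2*N)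
      have h2 : eVariationOn g (Icc (b 0) (b (2*N))) ≤ eVariationOn g Set.univ :=
        eVariationOn.mono g (subset_univ _)
      have hne : ∀ k ∈ Finset.range (2*N), eVariationOn g (Icc (b k) (b (k+1))) ≠ ⊤ :=
        fun k _ => ne_top_of_le_ne_top hV (eVariationOn.mono g (subset_univ _))
      calc ∑ k ∈ Finset.range (2*N), (eVariationOn g (Icc (b k) (b (k+1)))).toReal
          = (∑ k ∈ Finset.range (2*N), eVariationOn g (Icc (b k) (b (k+1)))).toReal :=
            (ENNReal.toReal_sum hne).symm
        _ ≤ V := ENNReal.toReal_mono hV (h1.trans h2)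
    -- |G| at grid points
    have hGb : ∀ k : ℕ, |G (b k)| * h ≤
        ∫ t in Icc ((((k:ℤ) - N : ℤ):ℝ)*h) (((((k:ℤ) - N : ℤ):ℝ)+1)*h), |G t| := fun k => hGa ((k:ℤ) - (N:ℤ))
    -- sums of |G| at grid points
    have hsum1 : ∑ k ∈ Finset.range (2*N), |G (b k)| ≤ A / h := by
      set c : ℕ → ℝ := fun k => ((k:ℝ) - (N:ℝ)) * h with hcdef
      have hc : ∀ k, c k ≤ c (k+1) := by
        intro k; simp only [hcdef]; push_cast; nlinarith
      have hterm : ∀ k : ℕ, |G (b k)| * h ≤ ∫ t in Icc (c k) (c (k+1)), |G t| := by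
        intro k
        have := hGb k
        have e1 : (((k:ℤ) - (N:ℤ) : ℤ):ℝ) * h = c k := by
          simp only [hcdef]; push_cast; ring
        have e2 : ((((k:ℤ) - (N:ℤ) : ℤ):ℝ) + 1) * h = c (k+1) := by
          simp only [hcdef]; push_cast; ring
        rwa [e1, e2] at this
      have hsum : ∑ k ∈ Finset.range (2*N), |G (b k)| * h ≤ A := by
        calc ∑ k ∈ Finset.range (2*N), |G (b k)| * h
            ≤ ∑ k ∈ Finset.range (2*N), ∫ t in Icc (c k) (c (k+1)), |G t| :=
              Finset.sum_le_sum fun k _ => hterm k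
          _ ≤ A := gnbv_lemE hGabs (fun x => abs_nonneg _) c hc (2*N)
      rw [le_div_iff₀ hh, Finset.sum_mul]
      exact hsum
    have hsum2 : ∑ k ∈ Finset.range (2*N), |G (b (k+1))| ≤ A / h := by
      set c : ℕ → ℝ := fun k => ((k:ℝ) + 1 - (N:ℝ)) * h with hcdef
      have hc : ∀ k, c k ≤ c (k+1) := by
        intro k; simp only [hcdef]; push_cast; nlinarith
      have hterm : ∀ k : ℕ, |G (b (k+1))| * h ≤ ∫ t in Icc (c k) (c (k+1)), |G t| := by
        intro k
        have := hGb (k+1)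
        have e1 : ((((k+1:ℕ):ℤ) - (N:ℤ) : ℤ):ℝ) * h = c k := by
          simp only [hcdef]; push_cast; ring
        have e2 : (((((k+1:ℕ):ℤ) - (N:ℤ) : ℤ):ℝ) + 1) * h = c (k+1) := by
          simp only [hcdef]; push_cast; ring
        rwa [e1, e2] at this
      have hsum : ∑ k ∈ Finset.range (2*N), |G (b (k+1))| * h ≤ A := by
        calc ∑ k ∈ Finset.range (2*N), |G (b (k+1))| * h
            ≤ ∑ k ∈ Finset.range (2*N), ∫ t in Icc (c k) (c (k+1)), |G t| :=
              Finset.sum_le_sum fun k _ => hterm k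
          _ ≤ A := gnbv_lemE hGabs (fun x => abs_nonneg _) c hc (2*N)
      rw [le_div_iff₀ hh, Finset.sum_mul]
      exact hsum
    -- combine via lemma B
    have hB := gnbv_lemB hg hV b hb (2*N)
    have hBsum : ∑ k ∈ Finset.range (2*N),
          (|(∫ y in Iic (b (k + 1)), g y) - (∫ y in Iic (b k), g y)| +
            (b (k + 1) - b k) * (eVariationOn g (Icc (b k) (b (k + 1)))).toReal)
        ≤ 2*A/h + 2*h*V := by
      have hterm : ∀ k ∈ Finset.range (2*N),
          |(∫ y in Iic (b (k + 1)), g y) - (∫ y in Iic (b k), g y)| +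
            (b (k + 1) - b k) * (eVariationOn g (Icc (b k) (b (k + 1)))).toReal
          ≤ (|G (b (k+1))| + |G (b k)|) +
            2*h * (eVariationOn g (Icc (b k) (b (k + 1)))).toReal := by
        intro k _
        have h1 : |(∫ y in Iic (b (k + 1)), g y) - (∫ y in Iic (b k), g y)|
            ≤ |G (b (k+1))| + |G (b k)| := abs_sub _ _
        have h2 : (b (k + 1) - b k) * (eVariationOn g (Icc (b k) (b (k + 1)))).toReal
            ≤ 2*h * (eVariationOn g (Icc (b k) (b (k + 1)))).toReal :=
          mul_le_mul_of_nonneg_right (hbstep k) ENNReal.toReal_nonneg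
        linarith
      calc ∑ k ∈ Finset.range (2*N),
            (|(∫ y in Iic (b (k + 1)), g y) - (∫ y in Iic (b k), g y)| +
              (b (k + 1) - b k) * (eVariationOn g (Icc (b k) (b (k + 1)))).toReal)
          ≤ ∑ k ∈ Finset.range (2*N), ((|G (b (k+1))| + |G (b k)|) +
              2*h * (eVariationOn g (Icc (b k) (b (k + 1)))).toReal) :=
            Finset.sum_le_sum hterm
        _ = (∑ k ∈ Finset.range (2*N), |G (b (k+1))|) +
              (∑ k ∈ Finset.range (2*N), |G (b k)|) +
              2*h * ∑ k ∈ Finset.range (2*N),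
                (eVariationOn g (Icc (b k) (b (k + 1)))).toReal := by
            rw [Finset.sum_add_distrib, Finset.sum_add_distrib, ← Finset.mul_sum]
        _ ≤ A/h + A/h + 2*h*V := by
            have := mul_le_mul_of_nonneg_left hVsum (by linarith : (0:ℝ) ≤ 2*h)
            linarith
        _ = 2*A/h + 2*h*V := by ring
    have hIcc : (∫ x in Icc (b 0) (b (2*N)), |g x|) ≤ 2*A/h + 2*h*V := hB.trans hBsum
    -- the big interval is contained in [b 0, b (2N)]
    have hsub : Icc ((1-(N:ℝ))*h) ((N:ℝ)*h) ⊆ Icc (b 0) (b (2*N)) := by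
      apply Icc_subset_Icc
      · have := (ha ((0:ℤ) - N)).2
        have e : (((0:ℤ) - N : ℤ):ℝ) = -(N:ℝ) := by push_cast; ring
        rw [e] at this
        simp only [hbdef]
        push_cast
        calc a ((0:ℕ) - (N:ℤ)) ≤ (-(N:ℝ)+1)*h := by
              simpa using this
          _ = (1-(N:ℝ))*h := by ring
      · have := (ha (((2*N:ℕ):ℤ) - N)).1
        have e : ((((2*N:ℕ):ℤ) - N : ℤ):ℝ) = (N:ℝ) := by push_cast; ring
        rw [e] at this
        simpa [hbdef] using this
    calc (∫ x in Icc ((1-(N:ℝ))*h) ((N:ℝ)*h), |g x|)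
        ≤ ∫ x in Icc (b 0) (b (2*N)), |g x| := by
          apply setIntegral_mono_set hg.abs.integrableOn
            (Eventually.of_forall fun x => abs_nonneg _) (HasSubset.Subset.eventuallyLE hsub)
      _ ≤ 2*A/h + 2*h*V := hIcc
  -- pass to the limit N → ∞
  set s : ℕ → Set ℝ := fun N => Icc ((1-(N:ℝ))*h) ((N:ℝ)*h) with hsdef
  have hsm : ∀ N, MeasurableSet (s N) := fun N => measurableSet_Icc
  have hmono : Monotone s := by
    intro N M hNM
    apply Icc_subset_Icc
    · have : (N:ℝ) ≤ M := Nat.cast_le.2 hNM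
      nlinarith
    · have : (N:ℝ) ≤ M := Nat.cast_le.2 hNM
      nlinarith
  have hU : ⋃ N, s N = Set.univ := by
    apply eq_univ_of_forall
    intro x
    obtain ⟨N, hN⟩ := exists_nat_gt (|x|/h + 1)
    refine mem_iUnion.2 ⟨N, ?_⟩
    have h1 : |x|/h + 1 < N := hN
    have h2 : |x| < ((N:ℝ) - 1) * h := by
      have h3 : |x|/h < (N:ℝ) - 1 := by linarith
      calc |x| = (|x|/h)*h := by field_simp
        _ < ((N:ℝ)-1)*h := mul_lt_mul_of_pos_right h3 hh
    constructor
    · have := neg_abs_le x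
      nlinarith [abs_nonneg x]
    · have := le_abs_self x
      nlinarith [abs_nonneg x]
  have hTend := tendsto_setIntegral_of_monotone hsm hmono
    (by rw [hU]; exact hg.abs.integrableOn)
  rw [hU] at hTend
  have hlim : (∫ x in Set.univ, |g x|) ≤ 2*A/h + 2*h*V :=
    le_of_tendsto hTend (Eventually.of_forall main)
  rwa [setIntegral_univ] at hlim

/-- **Gagliardo–Nirenberg type interpolation for BV functions** (inequality (5.2) of the
paper).  There is a universal constant `C ≥ 0` such that for every
`g ∈ BV(ℝ) ∩ L¹(ℝ)`, with primitive `G(x) = ∫_{-∞}^x g` in `L¹(ℝ)`,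
`‖g‖_{L¹} ≤ C · TV[g]^{1/2} · ‖G‖_{L¹}^{1/2}`. -/
theorem gagliardo_nirenberg_bv :
    ∃ C : ℝ, 0 ≤ C ∧
      ∀ g : ℝ → ℝ, MeasureTheory.Integrable g →
        eVariationOn g Set.univ ≠ ⊤ →
        MeasureTheory.Integrable (fun x : ℝ => ∫ y in Set.Iic x, g y) →
        (∫ x : ℝ, |g x|) ≤
          C * Real.sqrt (eVariationOn g Set.univ).toReal *
            Real.sqrt (∫ x : ℝ, |∫ y in Set.Iic x, g y|) := by
  refine ⟨4, by norm_num, ?_⟩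
  intro g hg hV hG
  set I : ℝ := ∫ x : ℝ, |g x| with hIdef
  set A : ℝ := ∫ x : ℝ, |∫ y in Set.Iic x, g y| with hAdef
  set V : ℝ := (eVariationOn g Set.univ).toReal with hVdef
  have hA0 : 0 ≤ A := integral_nonneg fun x => abs_nonneg _
  have hV0 : 0 ≤ V := ENNReal.toReal_nonneg
  have master : ∀ h : ℝ, 0 < h → I ≤ 2*A/h + 2*h*V := fun h hh => gnbv_lemD hg hV hG hh
  -- approximate with ε
  have happrox : ∀ ε : ℝ, 0 < ε → I ≤ 4 * Real.sqrt (V + ε) * Real.sqrt (A + ε) := by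
    intro ε hε
    have hAε : 0 < A + ε := by linarith
    have hVε : 0 < V + ε := by linarith
    have hsA : 0 < Real.sqrt (A + ε) := Real.sqrt_pos.2 hAε
    have hsV : 0 < Real.sqrt (V + ε) := Real.sqrt_pos.2 hVε
    set h : ℝ := Real.sqrt (A + ε) / Real.sqrt (V + ε) with hhdef
    have hh : 0 < h := div_pos hsA hsV
    have hsq_A : Real.sqrt (A + ε) * Real.sqrt (A + ε) = A + ε := Real.mul_self_sqrt hAε.le
    have hsq_V : Real.sqrt (V + ε) * Real.sqrt (V + ε) = V + ε := Real.mul_self_sqrt hVε.le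
    have hsAne : Real.sqrt (A + ε) ≠ 0 := hsA.ne'
    have hsVne : Real.sqrt (V + ε) ≠ 0 := hsV.ne'
    have t1 : 2*A/h = 2*A*Real.sqrt (V+ε)/Real.sqrt (A+ε) := by
      rw [hhdef]; field_simp
    have t2 : 2*h*V = 2*V*Real.sqrt (A+ε)/Real.sqrt (V+ε) := by
      rw [hhdef]; field_simp
    have b1 : 2*A*Real.sqrt (V+ε)/Real.sqrt (A+ε) ≤ 2*Real.sqrt (V+ε)*Real.sqrt (A+ε) := by
      rw [div_le_iff₀ hsA]; nlinarith [hsq_A, hsV.le]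
    have b2 : 2*V*Real.sqrt (A+ε)/Real.sqrt (V+ε) ≤ 2*Real.sqrt (V+ε)*Real.sqrt (A+ε) := by
      rw [div_le_iff₀ hsV]; nlinarith [hsq_V, hsA.le]
    calc I ≤ 2*A/h + 2*h*V := master h hh
      _ ≤ 4 * Real.sqrt (V + ε) * Real.sqrt (A + ε) := by rw [t1, t2]; linarith
  -- let ε → 0 along 1/(n+1)
  have hTend : Tendsto (fun n : ℕ => 4 * Real.sqrt (V + 1/((n:ℝ)+1)) *
      Real.sqrt (A + 1/((n:ℝ)+1))) atTop (𝓝 (4 * Real.sqrt V * Real.sqrt A)) := by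
    have h0 : Tendsto (fun n : ℕ => 1/((n:ℝ)+1)) atTop (𝓝 0) :=
      tendsto_one_div_add_atTop_nhds_zero_nat
    have hc : Continuous (fun t : ℝ => 4 * Real.sqrt (V + t) * Real.sqrt (A + t)) := by
      fun_prop
    have := (hc.tendsto 0).comp h0
    simpa [Function.comp_def] using this
  apply ge_of_tendsto hTend
  apply Eventually.of_forall
  intro n
  exact happrox (1/((n:ℝ)+1)) (by positivity)
end
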